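/- arXiv:0910.2446 — 10 statements merged into one kernel-verified Lean document; each statement's English description precedes it below -/
import Mathlib

section
/- Let a, b be real numbers with a² − b² = 1, let t be real, and let n be a natural number. Then T_n evaluated at the complex number a·cos t + i·b·sin t equals ½((a + b)ⁿ·e^{int} + (a − b)ⁿ·e^{−int}). -/
/-- If `a² - b² = 1`, then
`T_n(a·cos t + i·b·sin t) = ½((a+b)ⁿ e^{int} + (a−b)ⁿ e^{−int})`. -/
theorem stmt_1 (a b t : ℝ) (h : a ^ 2 - b ^ 2 = 1) (n : ℕ) :
    (Polynomial.Chebyshev.T ℂ n).eval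
        ((a : ℂ) * Real.cos t + Complex.I * b * Real.sin t) =
      (1 / 2) * (((a : ℂ) + b) ^ n * Complex.exp (Complex.I * n * t) +
        ((a : ℂ) - b) ^ n * Complex.exp (-(Complex.I * n * t))) := by
  have hprod : ((a : ℂ) + b) * ((a : ℂ) - b) = 1 := by
    have h' : ((a : ℂ) ^ 2 - b ^ 2) = 1 := by exact_mod_cast congrArg (Complex.ofReal) h
    linear_combination h'
  have hab : ((a : ℂ) + b) ≠ 0 := by
    intro h0; rw [h0, zero_mul] at hprod; exact one_ne_zero hprod.symm
  set θ : ℂ := (t : ℂ) - Complex.I * Complex.log ((a : ℂ) + b) with hθ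
  have e1 : Complex.exp (θ * Complex.I) = ((a : ℂ) + b) * Complex.exp ((t : ℂ) * Complex.I) := by
    have : θ * Complex.I = Complex.log ((a : ℂ) + b) + (t : ℂ) * Complex.I := by
      rw [hθ]; ring_nf; rw [Complex.I_sq]; ring
    rw [this, Complex.exp_add, Complex.exp_log hab]
  have e2 : Complex.exp (-θ * Complex.I) =
      ((a : ℂ) - b) * Complex.exp (-(t : ℂ) * Complex.I) := by
    have h1 : Complex.exp (-θ * Complex.I) = (Complex.exp (θ * Complex.I))⁻¹ := by
      rw [← Complex.exp_neg]; ring_nf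
    have h2 : Complex.exp (-(t : ℂ) * Complex.I) = (Complex.exp ((t : ℂ) * Complex.I))⁻¹ := by
      rw [← Complex.exp_neg]; ring_nf
    rw [h1, h2, e1, mul_inv]
    have hinv : ((a : ℂ) + b)⁻¹ = (a : ℂ) - b :=
      inv_eq_of_mul_eq_one_right hprod
    rw [hinv]
  have hcos : Complex.cos θ = (a : ℂ) * Real.cos t + Complex.I * b * Real.sin t := by
    rw [Complex.cos, e1, e2, Complex.ofReal_cos, Complex.ofReal_sin,
      Complex.cos, Complex.sin]
    have h2 : Complex.exp (-(t : ℂ) * Complex.I) = (Complex.exp ((t : ℂ) * Complex.I))⁻¹ := by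
      rw [← Complex.exp_neg]; ring_nf
    rw [h2]
    have hne : Complex.exp ((t : ℂ) * Complex.I) ≠ 0 := Complex.exp_ne_zero _
    field_simp
    linear_combination ((b : ℂ) * (Complex.exp ((t:ℂ) * Complex.I) *
      Complex.exp ((t:ℂ) * Complex.I) - 1)) * Complex.I_sq
  have key := Polynomial.Chebyshev.T_complex_cos θ (n : ℤ)
  rw [← hcos] at *
  rw [key, Complex.cos]
  have en1 : Complex.exp ((n : ℂ) * θ * Complex.I) =
      ((a : ℂ) + b) ^ n * Complex.exp (Complex.I * n * t) := by
    rw [show (n : ℂ) * θ * Complex.I = (n : ℂ) * (θ * Complex.I) by ring,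
      Complex.exp_nat_mul, e1, mul_pow, ← Complex.exp_nat_mul]
    ring_nf
  have en2 : Complex.exp (-((n : ℂ) * θ) * Complex.I) =
      ((a : ℂ) - b) ^ n * Complex.exp (-(Complex.I * n * t)) := by
    rw [show -((n : ℂ) * θ) * Complex.I = (n : ℂ) * (-θ * Complex.I) by ring,
      Complex.exp_nat_mul, e2, mul_pow, ← Complex.exp_nat_mul]
    ring_nf
  push_cast
  rw [en1, en2]
  ring
end

section
/- Let n ≥ 1 be a natural number, let a > b > 0 be real numbers, and set c = √(a² − b²) (assume a ≠ b so c > 0). Then the function f : ℝ → ℂ defined by f(t) = T_n((a/c)·cos t + i·(b/c)·sin t) is periodic with period 2π/n. -/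
/-- For `a > b > 0` and `c = √(a² − b²)`, the function
`t ↦ T_n((a/c)·cos t + i·(b/c)·sin t)` is periodic with period `2π/n`. -/
theorem stmt_2 (n : ℕ) (hn : 1 ≤ n) (a b : ℝ) (hb : 0 < b) (hba : b < a)
    (c : ℝ) (hc : c = Real.sqrt (a ^ 2 - b ^ 2)) :
    Function.Periodic
      (fun t : ℝ => (Polynomial.Chebyshev.T ℂ n).eval
        (((a / c : ℝ) : ℂ) * Real.cos t + Complex.I * ((b / c : ℝ) : ℂ) * Real.sin t))
      (2 * Real.pi / n) := by
  have ha : 0 < a := hb.trans hba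
  have hc2 : c ^ 2 = a ^ 2 - b ^ 2 := by
    rw [hc, Real.sq_sqrt]
    nlinarith
  have hcpos : 0 < c := by
    rw [hc]
    apply Real.sqrt_pos.mpr
    nlinarith
  set θ : ℝ := Real.arsinh (b / c) with hθ
  have hsinh : Real.sinh θ = b / c := Real.sinh_arsinh _
  have hcosh : Real.cosh θ = a / c := by
    have h1 : Real.cosh θ ^ 2 = 1 + (b / c) ^ 2 := by
      rw [Real.cosh_sq, hsinh]; ring
    have h2 : (a / c) ^ 2 = 1 + (b / c) ^ 2 := by
      field_simp
      nlinarith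
    have hcoshpos := Real.cosh_pos (x := θ)
    have hapos : 0 < a / c := div_pos ha hcpos
    nlinarith
  have key : ∀ t : ℝ,
      (((a / c : ℝ) : ℂ) * Real.cos t + Complex.I * ((b / c : ℝ) : ℂ) * Real.sin t)
        = Complex.cos ((t : ℂ) - θ * Complex.I) := by
    intro t
    rw [Complex.cos_sub]
    have hcos : Complex.cos ((θ : ℝ) * Complex.I) = ((a / c : ℝ) : ℂ) := by
      rw [Complex.cos_mul_I]
      rw [show ((θ : ℝ) : ℂ) = ((θ : ℝ) : ℂ) from rfl]
      rw [← Complex.ofReal_cosh, hcosh]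
    have hsin : Complex.sin ((θ : ℝ) * Complex.I) = ((b / c : ℝ) : ℂ) * Complex.I := by
      rw [Complex.sin_mul_I, ← Complex.ofReal_sinh, hsinh]
    rw [hcos, hsin, ← Complex.ofReal_cos, ← Complex.ofReal_sin]
    ring
  intro t
  simp only [key]
  rw [Polynomial.Chebyshev.T_complex_cos, Polynomial.Chebyshev.T_complex_cos]
  have hn0 : (n : ℂ) ≠ 0 := by
    exact_mod_cast (Nat.pos_of_ne_zero (by omega)).ne'
  have : ((n : ℤ) : ℂ) * (((t + 2 * Real.pi / n : ℝ) : ℂ) - θ * Complex.I)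
      = ((n : ℤ) : ℂ) * ((t : ℂ) - θ * Complex.I) + 2 * Real.pi := by
    push_cast
    field_simp
    ring
  rw [this, Complex.cos_add_two_pi]
end

section
/- Let n ≥ 1 be a natural number, let a > b > 0 be real numbers with a ≠ b, set c = √(a² − b²), and let θ be real. Then for every integer k, T_n((a/c)·cos(θ + 2kπ/n) + i·(b/c)·sin(θ + 2kπ/n)) = ½(((a + b)/c)ⁿ·e^{inθ} + ((a − b)/c)ⁿ·e^{−inθ}). In particular this value is independent of k, so T_n is constant on the n points (a/c)·cos(θ + 2kπ/n) + i·(b/c)·sin(θ + 2kπ/n), k = 0, …, n − 1. -/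
/-- For `a > b > 0`, `c = √(a² − b²)`, any real `θ` and any integer `k`,
`T_n((a/c)·cos(θ + 2kπ/n) + i·(b/c)·sin(θ + 2kπ/n))
  = ½(((a+b)/c)ⁿ e^{inθ} + ((a−b)/c)ⁿ e^{−inθ})`;
in particular this value is independent of `k`. -/
theorem stmt_3 (n : ℕ) (hn : 1 ≤ n) (a b : ℝ) (hb : 0 < b) (hba : b < a)
    (c : ℝ) (hc : c = Real.sqrt (a ^ 2 - b ^ 2)) (θ : ℝ) (k : ℤ) :
    (Polynomial.Chebyshev.T ℂ n).eval
        (((a / c : ℝ) : ℂ) * Real.cos (θ + 2 * k * Real.pi / n) +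
          Complex.I * ((b / c : ℝ) : ℂ) * Real.sin (θ + 2 * k * Real.pi / n)) =
      (1 / 2) * ((((a + b) / c : ℝ) : ℂ) ^ n * Complex.exp (Complex.I * n * θ) +
        (((a - b) / c : ℝ) : ℂ) ^ n * Complex.exp (-(Complex.I * n * θ))) := by
  have hc0 : (0:ℝ) < c := by
    rw [hc]; exact Real.sqrt_pos.2 (by nlinarith)
  have hc2 : c ^ 2 = a ^ 2 - b ^ 2 := by
    rw [hc]; exact Real.sq_sqrt (by nlinarith)
  have hr : (0:ℝ) < (a+b)/c := div_pos (by linarith) hc0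
  have hrs : ((a+b)/c) * ((a-b)/c) = 1 := by
    field_simp
    nlinarith
  have hn0 : (n:ℂ) ≠ 0 := Nat.cast_ne_zero.2 (by omega)
  set r : ℝ := (a+b)/c with hrdef
  set s : ℝ := (a-b)/c with hsdef
  set φ : ℝ := θ + 2 * k * Real.pi / n with hφ
  set w : ℂ := (φ : ℂ) - Complex.I * Real.log r with hw
  have he1 : Complex.exp (Complex.I * w) = (r:ℂ) * Complex.exp (Complex.I * φ) := by
    have : Complex.I * w = (Real.log r : ℂ) + Complex.I * φ := by
      rw [hw]; ring_nf; rw [Complex.I_sq]; ring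
    rw [this, Complex.exp_add, ← Complex.ofReal_exp, Real.exp_log hr]
  have hrsC : (r:ℂ) * (s:ℂ) = 1 := by exact_mod_cast hrs
  have hsr : (s:ℂ) = ((r:ℂ))⁻¹ := eq_inv_of_mul_eq_one_left (by linear_combination hrsC)
  have he2 : Complex.exp (-(Complex.I * w)) = (s:ℂ) * Complex.exp (-(Complex.I * φ)) := by
    rw [hsr, Complex.exp_neg, he1, Complex.exp_neg, mul_inv]
  have ha' : (r:ℂ) + (s:ℂ) = 2 * ((a:ℂ)/(c:ℂ)) := by
    have : r + s = 2 * (a/c) := by rw [hrdef, hsdef]; field_simp; ring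
    exact_mod_cast this
  have hb' : (r:ℂ) - (s:ℂ) = 2 * ((b:ℂ)/(c:ℂ)) := by
    have : r - s = 2 * (b/c) := by rw [hrdef, hsdef]; field_simp; ring
    exact_mod_cast this
  have hcos : ((a / c : ℝ) : ℂ) * Real.cos φ + Complex.I * ((b / c : ℝ) : ℂ) * Real.sin φ
      = Complex.cos w := by
    have h1 : Complex.cos w
        = ((r:ℂ) * Complex.exp (Complex.I * φ) + (s:ℂ) * Complex.exp (-(Complex.I * φ))) / 2 := by
      rw [Complex.cos, show -w * Complex.I = -(Complex.I * w) by ring,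
        show w * Complex.I = Complex.I * w by ring, he1, he2]
    rw [h1, show Complex.I * (φ:ℂ) = (φ:ℂ) * Complex.I by ring]
    rw [show -((φ:ℂ) * Complex.I) = ((-φ : ℝ):ℂ) * Complex.I by push_cast; ring]
    rw [Complex.exp_mul_I, Complex.exp_mul_I]
    push_cast
    rw [Complex.cos_neg, Complex.sin_neg]
    linear_combination (-(Complex.cos (φ:ℂ)) / 2) * ha' + (-(Complex.I * Complex.sin (φ:ℂ)) / 2) * hb'
  rw [hcos, Polynomial.Chebyshev.T_complex_cos]
  push_cast
  have hnw1 : Complex.exp (Complex.I * ((n:ℂ) * w))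
      = (r:ℂ)^n * Complex.exp (Complex.I * (n:ℂ) * (θ:ℂ)) := by
    rw [show Complex.I * ((n:ℂ) * w) = (n:ℕ) * (Complex.I * w) by ring,
      Complex.exp_nat_mul, he1, mul_pow, ← Complex.exp_nat_mul]
    congr 1
    rw [show ((n:ℕ):ℂ) * (Complex.I * (φ:ℂ))
        = Complex.I * (n:ℂ) * (θ:ℂ) + (k:ℂ) * (2 * (Real.pi:ℂ) * Complex.I) by
      rw [hφ]; push_cast; field_simp]
    rw [Complex.exp_add, Complex.exp_int_mul_two_pi_mul_I, mul_one]
  have hnw2 : Complex.exp (-(Complex.I * ((n:ℂ) * w)))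
      = (s:ℂ)^n * Complex.exp (-(Complex.I * (n:ℂ) * (θ:ℂ))) := by
    rw [Complex.exp_neg, hnw1, Complex.exp_neg, mul_inv, hsr, inv_pow]
  rw [Complex.cos,
    show -((n:ℂ) * w) * Complex.I = -(Complex.I * ((n:ℂ) * w)) by ring,
    show (n:ℂ) * w * Complex.I = Complex.I * ((n:ℂ) * w) by ring,
    hnw1, hnw2]
  ring
end

section
/- Let n ≥ 1 be a natural number, let a > b > 0 be real numbers with a² − b² = 1, let θ be real, and set w = ½((a + b)ⁿ·e^{inθ} + (a − b)ⁿ·e^{−inθ}). Define z_k = a·cos(θ + 2kπ/n) + i·b·sin(θ + 2kπ/n) for k = 0, …, n − 1. Then the points z_0, …, z_{n−1} are pairwise distinct, and the solution set {z ∈ ℂ : T_n(z) = w} is exactly {z_0, …, z_{n−1}}. -/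
/-- For `a > b > 0` with `a² − b² = 1` and
`w = ½((a+b)ⁿ e^{inθ} + (a−b)ⁿ e^{−inθ})`, the points
`z_k = a·cos(θ + 2kπ/n) + i·b·sin(θ + 2kπ/n)`, `k = 0, …, n−1`, are
pairwise distinct and `{z : T_n(z) = w} = {z_0, …, z_{n−1}}`. -/
theorem stmt_4 (n : ℕ) (hn : 1 ≤ n) (a b : ℝ) (hb : 0 < b) (hba : b < a)
    (h1 : a ^ 2 - b ^ 2 = 1) (θ : ℝ) (w : ℂ)
    (hw : w = (1 / 2) * (((a : ℂ) + b) ^ n * Complex.exp (Complex.I * n * θ) +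
      ((a : ℂ) - b) ^ n * Complex.exp (-(Complex.I * n * θ))))
    (z : ℕ → ℂ)
    (hz : ∀ k : ℕ, z k = (a : ℂ) * Real.cos (θ + 2 * k * Real.pi / n) +
      Complex.I * b * Real.sin (θ + 2 * k * Real.pi / n)) :
    (∀ k < n, ∀ l < n, k ≠ l → z k ≠ z l) ∧
      {ζ : ℂ | (Polynomial.Chebyshev.T ℂ n).eval ζ = w} = {ζ : ℂ | ∃ k < n, ζ = z k} := by
  have hnR : (n:ℝ) ≠ 0 := Nat.cast_ne_zero.mpr (by omega)
  have hnC : (n:ℂ) ≠ 0 := Nat.cast_ne_zero.mpr (by omega)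
  set c : ℝ := Real.log (a + b) with hcdef
  have hab : (0:ℝ) < a + b := by linarith
  have hec : Real.exp c = a + b := Real.exp_log hab
  have hinv : a - b = (a + b)⁻¹ := by
    field_simp
    nlinarith [h1]
  have henc : Real.exp (-c) = a - b := by rw [Real.exp_neg, hec, hinv]
  have hcosh : Real.cosh c = a := by rw [Real.cosh_eq, hec, henc]; ring
  have hsinh : Real.sinh c = b := by rw [Real.sinh_eq, hec, henc]; ring
  -- Lemma A: z_k as complex cosine
  have hA : ∀ φ : ℝ, Complex.cos ((φ:ℂ) - (c:ℂ) * Complex.I)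
      = (a:ℂ) * Real.cos φ + Complex.I * b * Real.sin φ := by
    intro φ
    rw [Complex.cos_sub, Complex.cos_mul_I, Complex.sin_mul_I,
      ← Complex.ofReal_cos, ← Complex.ofReal_sin, ← Complex.ofReal_cosh, ← Complex.ofReal_sinh,
      hcosh, hsinh]
    ring
  -- w as complex cosine
  have hC : Complex.cos (((n*θ : ℝ):ℂ) - ((n*c : ℝ):ℂ) * Complex.I) = w := by
    rw [Complex.cos_sub, Complex.cos_mul_I, Complex.sin_mul_I, hw]
    rw [show Complex.cosh ((n*c:ℝ):ℂ) = ((a:ℂ)+b)^n / 2 + ((a:ℂ)-b)^n / 2 by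
      rw [← Complex.ofReal_cosh, Real.cosh_eq, Real.exp_nat_mul,
        show -((n:ℝ)*c) = (n:ℝ)*(-c) by ring, Real.exp_nat_mul, hec, henc]; push_cast; ring]
    rw [show Complex.sinh ((n*c:ℝ):ℂ) = ((a:ℂ)+b)^n / 2 - ((a:ℂ)-b)^n / 2 by
      rw [← Complex.ofReal_sinh, Real.sinh_eq, Real.exp_nat_mul,
        show -((n:ℝ)*c) = (n:ℝ)*(-c) by ring, Real.exp_nat_mul, hec, henc]; push_cast; ring]
    rw [show Complex.cos ((n*θ:ℝ):ℂ) = (Complex.exp (Complex.I*n*θ) + Complex.exp (-(Complex.I*n*θ)))/2 by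
      rw [Complex.cos]; push_cast; ring_nf]
    rw [show Complex.sin ((n*θ:ℝ):ℂ) = (Complex.exp (Complex.I*n*θ) - Complex.exp (-(Complex.I*n*θ)))/(2*Complex.I) by
      rw [Complex.sin]; push_cast; ring_nf; rw [Complex.inv_I]; ring]
    have hI := Complex.I_ne_zero
    field_simp
    ring
  -- evaluation on shifted cosines
  have hT : ∀ j : ℤ, (Polynomial.Chebyshev.T ℂ n).eval
      (Complex.cos ((θ:ℂ) + 2*(j:ℂ)*(Real.pi:ℂ)/(n:ℂ) - (c:ℂ)*Complex.I)) = w := by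
    intro j
    rw [show ((n:ℤ):ℤ) = (n:ℤ) from rfl]
    rw [Polynomial.Chebyshev.T_complex_cos]
    rw [show ((n:ℤ):ℂ) * ((θ:ℂ) + 2*(j:ℂ)*(Real.pi:ℂ)/(n:ℂ) - (c:ℂ)*Complex.I)
        = ((((n*θ : ℝ):ℂ) - ((n*c : ℝ):ℂ) * Complex.I)) + (j:ℂ)*(2*(Real.pi:ℂ)) by
      push_cast; field_simp; ring]
    rw [Complex.cos_add_int_mul_two_pi, hC]
  -- reduction of any integer shift to some k < n
  have hK : ∀ j : ℤ, ∃ k < n, Complex.cos ((θ:ℂ) + 2*(j:ℂ)*(Real.pi:ℂ)/(n:ℂ) - (c:ℂ)*Complex.I) = z k := by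
    intro j
    have hn' : (0:ℤ) < (n:ℤ) := by exact_mod_cast hn
    refine ⟨(j % (n:ℤ)).toNat, ?_, ?_⟩
    · have := Int.emod_lt_of_pos j hn'
      omega
    · have hk : (((j % (n:ℤ)).toNat : ℤ):ℂ) = ((j % (n:ℤ) : ℤ):ℂ) := by
        congr 1
        exact Int.toNat_of_nonneg (Int.emod_nonneg j (by omega))
      have hdecomp : (j:ℂ) = ((j % (n:ℤ) : ℤ):ℂ) + ((j / (n:ℤ) : ℤ):ℂ) * (n:ℂ) := by
        calc (j:ℂ) = ((j % (n:ℤ) + (n:ℤ) * (j / (n:ℤ)) : ℤ) : ℂ) := by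
              rw [Int.emod_add_mul_ediv]
          _ = _ := by push_cast; ring
      rw [hz, ← hA]
      rw [show ((θ + 2*((j % (n:ℤ)).toNat:ℕ)*Real.pi/n : ℝ):ℂ)
          = (θ:ℂ) + 2*(((j % (n:ℤ)).toNat:ℤ):ℂ)*(Real.pi:ℂ)/(n:ℂ) by push_cast; ring]
      rw [show (θ:ℂ) + 2*(j:ℂ)*(Real.pi:ℂ)/(n:ℂ) - (c:ℂ)*Complex.I
          = ((θ:ℂ) + 2*(((j % (n:ℤ)).toNat:ℤ):ℂ)*(Real.pi:ℂ)/(n:ℂ) - (c:ℂ)*Complex.I)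
            + ((j / (n:ℤ) : ℤ):ℂ)*(2*(Real.pi:ℂ)) by
        rw [hk, hdecomp]; field_simp; ring]
      rw [Complex.cos_add_int_mul_two_pi]
  have hπ : Real.pi ≠ 0 := Real.pi_ne_zero
  have hI := Complex.I_ne_zero
  constructor
  · intro k hk l hl hkl heq
    rw [hz k, hz l] at heq
    have hre : a * Real.cos (θ + 2*k*Real.pi/n) = a * Real.cos (θ + 2*l*Real.pi/n) := by
      have := congrArg Complex.re heq
      simpa [-Complex.ofReal_cos, -Complex.ofReal_sin] using this
    have him : b * Real.sin (θ + 2*k*Real.pi/n) = b * Real.sin (θ + 2*l*Real.pi/n) := by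
      have := congrArg Complex.im heq
      simpa [-Complex.ofReal_cos, -Complex.ofReal_sin] using this
    have ha0 : a ≠ 0 := by linarith
    have hb0 : b ≠ 0 := ne_of_gt hb
    have hcos := mul_left_cancel₀ ha0 hre
    have hsin := mul_left_cancel₀ hb0 him
    have hexp : Complex.exp (((θ + 2*k*Real.pi/n : ℝ):ℂ) * Complex.I)
        = Complex.exp (((θ + 2*l*Real.pi/n : ℝ):ℂ) * Complex.I) := by
      rw [Complex.exp_mul_I, Complex.exp_mul_I, ← Complex.ofReal_cos, ← Complex.ofReal_cos,
        ← Complex.ofReal_sin, ← Complex.ofReal_sin, hcos, hsin]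
    obtain ⟨m, hm⟩ := Complex.exp_eq_exp_iff_exists_int.mp hexp
    have hm' : ((θ + 2*k*Real.pi/n : ℝ):ℂ) = ((θ + 2*l*Real.pi/n + m*(2*Real.pi) : ℝ):ℂ) := by
      apply mul_right_cancel₀ hI
      push_cast at hm ⊢
      linear_combination hm
    have hre2 : (θ + 2*k*Real.pi/n : ℝ) = θ + 2*l*Real.pi/n + m*(2*Real.pi) :=
      Complex.ofReal_injective hm'
    have h5 : (k:ℝ) = l + m*n := by
      have h4 : 2*(k:ℝ)*Real.pi/n = 2*(l:ℝ)*Real.pi/n + m*(2*Real.pi) := by linarith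
      have h6 : (2*(k:ℝ)*Real.pi/n)*n = (2*(l:ℝ)*Real.pi/n + m*(2*Real.pi))*n := by rw [h4]
      rw [div_mul_cancel₀ _ hnR, add_mul, div_mul_cancel₀ _ hnR] at h6
      have h7 : (k:ℝ)*(2*Real.pi) = ((l:ℝ)+m*n)*(2*Real.pi) := by linear_combination h6
      exact mul_right_cancel₀ (by positivity) h7
    have h6 : (k:ℤ) = l + m*n := by exact_mod_cast h5
    have h7 : (k:ℤ) - l = 0 := by
      refine Int.eq_zero_of_abs_lt_dvd (⟨m, by rw [h6]; ring⟩ : (n:ℤ) ∣ ((k:ℤ) - l)) ?_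
      rw [abs_sub_lt_iff]
      omega
    omega
  · ext ζ
    simp only [Set.mem_setOf_eq]
    constructor
    · intro hζ
      obtain ⟨ψ, rfl⟩ := Complex.cos_surjective ζ
      rw [Polynomial.Chebyshev.T_complex_cos] at hζ
      have hEq : Complex.cos (((n:ℤ):ℂ) * ψ) = Complex.cos (((n*θ:ℝ):ℂ) - ((n*c:ℝ):ℂ)*Complex.I) := by
        rw [hζ, hC]
      obtain ⟨m, hm | hm⟩ := Complex.cos_eq_cos_iff.mp hEq
      · obtain ⟨k, hk, hkz⟩ := hK (-m)
        refine ⟨k, hk, ?_⟩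
        rw [← hkz]
        congr 1
        apply mul_left_cancel₀ hnC
        push_cast at hm ⊢
        field_simp
        linear_combination -hm
      · obtain ⟨k, hk, hkz⟩ := hK (-m)
        refine ⟨k, hk, ?_⟩
        rw [← hkz, ← Complex.cos_neg ψ]
        congr 1
        apply mul_left_cancel₀ hnC
        push_cast at hm ⊢
        field_simp
        linear_combination -hm
    · rintro ⟨k, hk, rfl⟩
      rw [hz, ← hA]
      rw [show ((θ + 2*(k:ℕ)*Real.pi/n : ℝ):ℂ) = (θ:ℂ) + 2*((k:ℤ):ℂ)*(Real.pi:ℂ)/(n:ℂ) by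
        push_cast; ring]
      exact hT (k:ℤ)
end

section
/- Let n ≥ 1 be a natural number and let w be a complex number that is not a real number lying in the interval [−1, 1]. Then there exist real numbers a > b > 0 with a² − b² = 1 and θ ∈ ℝ such that the solution set {z ∈ ℂ : T_n(z) = w} equals {a·cos(θ + 2kπ/n) + i·b·sin(θ + 2kπ/n) : k = 0, …, n − 1}. In other words, every nondegenerate level set of T_n consists of n equally spaced (in parameter) points on a single ellipse with foci ±1. -/
open Complex in
private lemma cos_decomp_aux (u v : ℝ) :
    Complex.cos ((u : ℂ) - (v : ℂ) * Complex.I) =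
      (Real.cosh v : ℂ) * (Real.cos u : ℂ) + Complex.I * (Real.sinh v : ℂ) * (Real.sin u : ℂ) := by
  rw [Complex.cos_sub, Complex.cos_mul_I, Complex.sin_mul_I,
    ← Complex.ofReal_cos, ← Complex.ofReal_sin, ← Complex.ofReal_cosh, ← Complex.ofReal_sinh]
  ring

/-- Every level set of `T_n` at a value `w` which is not a real number in
`[−1, 1]` consists of `n` equally spaced (in parameter) points on a single
ellipse with foci `±1`. -/
theorem stmt_5 (n : ℕ) (hn : 1 ≤ n) (w : ℂ)
    (hw : ¬ ∃ x : ℝ, x ∈ Set.Icc (-1 : ℝ) 1 ∧ (x : ℂ) = w) :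
    ∃ a b θ : ℝ, 0 < b ∧ b < a ∧ a ^ 2 - b ^ 2 = 1 ∧
      {ζ : ℂ | (Polynomial.Chebyshev.T ℂ n).eval ζ = w} =
        {ζ : ℂ | ∃ k < n, ζ = (a : ℂ) * Real.cos (θ + 2 * k * Real.pi / n) +
          Complex.I * b * Real.sin (θ + 2 * k * Real.pi / n)} := by
  have hn0 : (n : ℝ) ≠ 0 := by positivity
  have hnC : (n : ℂ) ≠ 0 := by exact_mod_cast Nat.cast_ne_zero.mpr (by omega)
  -- find ψ with cos ψ = w and ψ.im < 0
  obtain ⟨ψ₀, hψ₀⟩ := Complex.cos_surjective w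
  have him : ψ₀.im ≠ 0 := by
    intro h
    apply hw
    have hre : ψ₀ = (ψ₀.re : ℂ) := Complex.ext rfl (by simp [h])
    exact ⟨Real.cos ψ₀.re, ⟨Real.neg_one_le_cos _, Real.cos_le_one _⟩,
      by rw [Complex.ofReal_cos, ← hre, hψ₀]⟩
  obtain ⟨ψ, hψ, hψim⟩ : ∃ ψ, Complex.cos ψ = w ∧ ψ.im < 0 := by
    rcases lt_or_gt_of_ne him with h | h
    · exact ⟨ψ₀, hψ₀, h⟩
    · exact ⟨-ψ₀, by rw [Complex.cos_neg]; exact hψ₀, by simpa using h⟩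
  set s : ℝ := -ψ.im with hs
  set x : ℝ := ψ.re with hx
  have hs0 : 0 < s := by simp [hs]; linarith
  have hψ_eq : ψ = (x : ℂ) - (s : ℂ) * Complex.I := by
    apply Complex.ext <;> simp [hx, hs]
  set π := Real.pi
  -- key computation
  have key : ∀ m : ℤ, Complex.cos ((ψ + 2 * m * π) / n) =
      (Real.cosh (s / n) : ℂ) * (Real.cos (x / n + 2 * m * π / n) : ℂ) +
        Complex.I * (Real.sinh (s / n) : ℂ) * (Real.sin (x / n + 2 * m * π / n) : ℂ) := by
    intro m
    have h1 : (ψ + 2 * m * π) / n =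
        ((x / n + 2 * m * π / n : ℝ) : ℂ) - ((s / n : ℝ) : ℂ) * Complex.I := by
      rw [hψ_eq]; push_cast; field_simp; ring
    rw [h1, cos_decomp_aux]
  -- the value of T_n at these points
  have keyT : ∀ m : ℤ, (Polynomial.Chebyshev.T ℂ n).eval
      (Complex.cos ((ψ + 2 * m * π) / n)) = w := by
    intro m
    rw [Polynomial.Chebyshev.T_complex_cos]
    have h2 : ((n : ℤ) : ℂ) * ((ψ + 2 * m * π) / n) = ψ + m * (2 * π) := by
      push_cast; field_simp
    rw [h2, Complex.cos_add_int_mul_two_pi, hψ]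
  refine ⟨Real.cosh (s / n), Real.sinh (s / n), x / n,
    Real.sinh_pos_iff.mpr (by positivity), Real.sinh_lt_cosh _, Real.cosh_sq_sub_sinh_sq _, ?_⟩
  ext ζ
  simp only [Set.mem_setOf_eq]
  constructor
  · rintro hζ
    obtain ⟨ξ, rfl⟩ := Complex.cos_surjective ζ
    rw [Polynomial.Chebyshev.T_complex_cos] at hζ
    rw [← hψ] at hζ
    rw [Complex.cos_eq_cos_iff] at hζ
    have hcos : ∃ m' : ℤ, Complex.cos ξ = Complex.cos ((ψ + 2 * (m' : ℂ) * π) / n) := by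
      obtain ⟨m, hm | hm⟩ := hζ
      · refine ⟨-m, ?_⟩
        have harg : (ψ + 2 * ((-m : ℤ) : ℂ) * π) / n = ξ := by
          have h4 : ψ + 2 * ((-m : ℤ) : ℂ) * π = (n : ℂ) * ξ := by
            push_cast
            push_cast at hm
            linear_combination hm
          rw [h4, mul_div_cancel_left₀ _ hnC]
        rw [harg]
      · refine ⟨-m, ?_⟩
        have harg : (ψ + 2 * ((-m : ℤ) : ℂ) * π) / n = -ξ := by
          have h4 : ψ + 2 * ((-m : ℤ) : ℂ) * π = (n : ℂ) * (-ξ) := by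
            push_cast
            push_cast at hm
            linear_combination hm
          rw [h4, mul_div_cancel_left₀ _ hnC]
        rw [harg, Complex.cos_neg]
    obtain ⟨m', hcos⟩ := hcos
    set k : ℕ := (m' % (n : ℤ)).toNat with hkdef
    set j : ℤ := m' / (n : ℤ) with hjdef
    have hk : (k : ℤ) = m' % (n : ℤ) :=
      Int.toNat_of_nonneg (Int.emod_nonneg m' (by exact_mod_cast (by omega : (n : ℤ) ≠ 0)))
    have hklt : k < n := by
      have h1 : m' % (n : ℤ) < n :=
        Int.emod_lt_of_pos m' (by exact_mod_cast Nat.pos_of_ne_zero (by omega))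
      omega
    have hmeq : (m' : ℂ) = (k : ℂ) + (n : ℂ) * (j : ℂ) := by
      have h5 : (k : ℤ) + (n : ℤ) * j = m' := by
        rw [hk, hjdef]
        exact Int.emod_add_mul_ediv m' (n : ℤ)
      exact_mod_cast congrArg (fun z : ℤ => (z : ℂ)) h5.symm
    have h3 : ψ + 2 * (m' : ℂ) * π = (ψ + 2 * (k : ℕ) * π) + (n : ℂ) * ((j : ℂ) * (2 * π)) := by
      push_cast
      push_cast at hmeq
      linear_combination 2 * (π : ℂ) * hmeq
    have hdiv : (ψ + 2 * (m' : ℂ) * π) / n = (ψ + 2 * (k : ℕ) * π) / n + (j : ℂ) * (2 * π) := by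
      rw [h3, add_div, mul_div_cancel_left₀ _ hnC]
    refine ⟨k, hklt, ?_⟩
    rw [hcos, hdiv, Complex.cos_add_int_mul_two_pi]
    have h6 : (ψ + 2 * ((k : ℕ) : ℂ) * π) / n = (ψ + 2 * (((k : ℤ)) : ℂ) * π) / n := by
      norm_cast
    rw [h6, key (k : ℤ)]
    norm_cast
  · rintro ⟨k, hk, rfl⟩
    have h1 := key (k : ℤ)
    have h2 := keyT (k : ℤ)
    rw [h1] at h2
    convert h2 using 4 <;> push_cast <;> ring
end

section
/- Let n ≥ 3 be a natural number and let p be a complex polynomial of degree n whose derivative is p' = γ·∏_{k=1}^{n−1}(X − (α + β·cos(kπ/n))) for some complex constants γ ≠ 0, α, and β ≠ 0. Suppose the roots of p do not all lie on a single real line in ℂ. Then the roots of p form an affinely regular n-gon: there exist complex numbers u, v, w with u ≠ 0, v ≠ 0 and |u| ≠ |v| such that the multiset of roots of p equals {u·e^{2πik/n} + v·e^{−2πik/n} + w : k = 0, …, n − 1}; in particular p has n distinct roots. -/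
section Helpers
open Polynomial Polynomial.Chebyshev Complex


lemma two_X : (2 * X : ℂ[X]) = C 2 * X := by
  rw [map_ofNat]

lemma U_deg_coeff : ∀ m : ℕ, (U ℂ m).degree ≤ m ∧ (U ℂ m).coeff m = 2 ^ m
  | 0 => by simp [U_zero]
  | 1 => by
      rw [show ((1:ℕ):ℤ) = 1 from rfl, U_one]
      constructor
      · rw [two_X, degree_C_mul (by norm_num)]
        simp
      · simp [two_X, coeff_C_mul]
  | (m + 2) => by
      obtain ⟨h0d, h0c⟩ := U_deg_coeff m
      obtain ⟨h1d, h1c⟩ := U_deg_coeff (m + 1)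
      have hrec : U ℂ ((m : ℤ) + 2) = 2 * X * U ℂ ((m : ℤ) + 1) - U ℂ m := U_add_two ℂ m
      have hcast : ((m + 2 : ℕ) : ℤ) = (m : ℤ) + 2 := by push_cast; ring
      have hcast1 : ((m + 1 : ℕ) : ℤ) = (m : ℤ) + 1 := by push_cast; ring
      rw [hcast, hrec, ← hcast1]
      have hd1 : (2 * X * U ℂ ((m+1:ℕ):ℤ)).degree ≤ ((m + 2 : ℕ) : WithBot ℕ) := by
        refine le_trans (degree_mul_le _ _) ?_
        rw [two_X, degree_C_mul (by norm_num : (2:ℂ) ≠ 0), degree_X]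
        calc (1 : WithBot ℕ) + (U ℂ ((m+1:ℕ):ℤ)).degree ≤ 1 + ((m+1:ℕ) : WithBot ℕ) := by
              exact add_le_add le_rfl h1d
          _ = ((m + 2 : ℕ) : WithBot ℕ) := by
              rw [show ((1:WithBot ℕ)) = ((1:ℕ) : WithBot ℕ) from rfl, ← Nat.cast_add]
              norm_num; ring
      constructor
      · refine le_trans (degree_sub_le _ _) (max_le hd1 (le_trans h0d ?_))
        rw [Nat.cast_withBot, Nat.cast_withBot, WithBot.coe_le_coe]; omega
      · rw [coeff_sub, two_X, mul_assoc, coeff_C_mul, coeff_X_mul,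
          coeff_eq_zero_of_degree_lt (lt_of_le_of_lt h0d (by rw [Nat.cast_withBot, Nat.cast_withBot, WithBot.coe_lt_coe]; omega)),
          h1c]
        ring


lemma U_degree (m : ℕ) : (U ℂ m).degree = m := by
  obtain ⟨hd, hc⟩ := U_deg_coeff m
  exact le_antisymm hd (le_degree_of_ne_zero (by rw [hc]; exact pow_ne_zero _ two_ne_zero))

lemma U_natDegree (m : ℕ) : (U ℂ m).natDegree = m :=
  natDegree_eq_of_degree_eq_some (U_degree m)

lemma U_ne_zero (m : ℕ) : (U ℂ m) ≠ 0 := fun h => by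
  simpa [h] using U_degree m

lemma U_leadingCoeff (m : ℕ) : (U ℂ m).leadingCoeff = 2 ^ m := by
  rw [leadingCoeff, U_natDegree]; exact (U_deg_coeff m).2

lemma U_roots (n : ℕ) (hn : 3 ≤ n) :
    (U ℂ (n-1 : ℕ)).roots =
      (Finset.Icc 1 (n-1)).val.map (fun k : ℕ => ((Real.cos (k * Real.pi / n) : ℝ) : ℂ)) := by
  have hnR : (0:ℝ) < n := by positivity
  have hmem : ∀ k ∈ Finset.Icc 1 (n-1), (0:ℝ) < k * Real.pi / n ∧ k * Real.pi / n < Real.pi := by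
    intro k hk
    rw [Finset.mem_Icc] at hk
    constructor
    · have : (0:ℝ) < k := by exact_mod_cast Nat.lt_of_lt_of_le Nat.zero_lt_one hk.1
      positivity
    · rw [div_lt_iff₀ hnR]
      have hk2 : (k:ℝ) < n := by exact_mod_cast Nat.lt_of_le_of_lt hk.2 (by omega)
      calc (k:ℝ) * Real.pi < n * Real.pi := mul_lt_mul_of_pos_right hk2 Real.pi_pos
        _ = Real.pi * n := by ring
  have hroot : ∀ k ∈ Finset.Icc 1 (n-1),
      ((Real.cos (k * Real.pi / n) : ℝ) : ℂ) ∈ (U ℂ (n-1 : ℕ)).roots := by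
    intro k hk
    obtain ⟨h1, h2⟩ := hmem k hk
    set θ : ℝ := k * Real.pi / n with hθ
    rw [mem_roots (U_ne_zero _)]
    have hcast : ((n - 1 : ℕ) : ℤ) = (n:ℤ) - 1 := by omega
    have key := U_complex_cos (θ : ℂ) ((n:ℤ)-1)
    have hz : Complex.sin (((((n:ℤ) - 1 : ℤ) : ℂ) + 1) * (θ:ℂ)) = 0 := by
      have he : ((((n:ℤ) - 1 : ℤ) : ℂ) + 1) * (θ:ℂ) = ((k * Real.pi : ℝ) : ℂ) := by
        push_cast [hθ]
        have hn0 : (n:ℂ) ≠ 0 := by exact_mod_cast hnR.ne'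
        field_simp
        ring
      rw [he, ← Complex.ofReal_sin, Complex.ofReal_eq_zero]
      exact_mod_cast Real.sin_int_mul_pi k
    rw [hz] at key
    have hsin : Complex.sin (θ:ℂ) ≠ 0 := by
      rw [← Complex.ofReal_sin]
      exact_mod_cast (Real.sin_pos_of_pos_of_lt_pi h1 h2).ne'
    rw [IsRoot.def, hcast, Complex.ofReal_cos]
    exact (mul_eq_zero.mp key).resolve_right hsin
  have hinj : Set.InjOn (fun k : ℕ => ((Real.cos (k * Real.pi / n) : ℝ) : ℂ))
      (Finset.Icc 1 (n-1)) := by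
    intro j hj k hk h
    simp only at h
    have h' : Real.cos (j * Real.pi / n) = Real.cos (k * Real.pi / n) :=
      Complex.ofReal_inj.mp h
    have hj' := hmem j (by simpa using hj)
    have hk' := hmem k (by simpa using hk)
    have h2 := Real.injOn_cos ⟨hj'.1.le, hj'.2.le⟩ ⟨hk'.1.le, hk'.2.le⟩ h'
    have : (j:ℝ) = k := by
      field_simp [Real.pi_ne_zero, hnR.ne'] at h2
      exact_mod_cast h2
    exact_mod_cast this
  have hnd : ((Finset.Icc 1 (n-1)).val.map
      (fun k : ℕ => ((Real.cos (k * Real.pi / n) : ℝ) : ℂ))).Nodup :=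
    Multiset.Nodup.map_on (fun x hx y hy h => hinj (by simpa using hx) (by simpa using hy) h)
      (Finset.Icc 1 (n-1)).nodup
  have hle : ((Finset.Icc 1 (n-1)).val.map
      (fun k : ℕ => ((Real.cos (k * Real.pi / n) : ℝ) : ℂ))) ≤ (U ℂ (n-1 : ℕ)).roots := by
    rw [Multiset.le_iff_subset hnd]
    intro a ha
    obtain ⟨k, hk, rfl⟩ := Multiset.mem_map.mp ha
    exact hroot k hk
  have hcard : Multiset.card ((Finset.Icc 1 (n-1)).val.map
      (fun k : ℕ => ((Real.cos (k * Real.pi / n) : ℝ) : ℂ))) = n - 1 := by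
    rw [Multiset.card_map]
    simpa using Nat.card_Icc 1 (n-1)
  have hcard2 : Multiset.card (U ℂ (n-1 : ℕ)).roots = n - 1 := by
    rw [splits_iff_card_roots.mp (IsAlgClosed.splits _), U_natDegree]
  exact (Multiset.eq_of_le_of_card_le hle (by rw [hcard, hcard2])).symm


lemma U_fact (n : ℕ) (hn : 3 ≤ n) : U ℂ ((n-1 : ℕ) : ℤ) =
    C ((2:ℂ)^(n-1)) * ∏ k ∈ Finset.Icc 1 (n-1),
      (X - C ((Real.cos (k * Real.pi / n) : ℝ) : ℂ)) := by
  have hcard : Multiset.card (U ℂ ((n-1:ℕ):ℤ)).roots = (U ℂ ((n-1:ℕ):ℤ)).natDegree :=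
    splits_iff_card_roots.mp (IsAlgClosed.splits _)
  have h := C_leadingCoeff_mul_prod_multiset_X_sub_C hcard
  rw [U_leadingCoeff, U_roots n hn, Multiset.map_map] at h
  rw [← h, Finset.prod_eq_multiset_prod]
  rfl


-- representation of p
lemma rep (n : ℕ) (hn : 3 ≤ n) (p : Polynomial ℂ)
    (γ α β : ℂ) (hγ : γ ≠ 0) (hβ : β ≠ 0)
    (hp' : derivative p =
      γ • ∏ k ∈ Finset.Icc 1 (n - 1), (X - C (α + β * Real.cos (k * Real.pi / n)))) :
    ∃ K c : ℂ, K ≠ 0 ∧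
      p = C K * (T ℂ n).comp (C β⁻¹ * (X - C α)) + C c := by
  set L : ℂ[X] := C β⁻¹ * (X - C α) with hL
  have hn0 : (n:ℂ) ≠ 0 := by
    exact_mod_cast (by positivity : (0:ℝ) < (n:ℝ)).ne'
  set K : ℂ := γ * β^n / ((n:ℂ) * 2^(n-1)) with hK
  have hK0 : K ≠ 0 := by
    apply div_ne_zero (mul_ne_zero hγ (pow_ne_zero _ hβ))
    exact mul_ne_zero hn0 (pow_ne_zero _ two_ne_zero)
  refine ⟨K, (p - C K * (T ℂ n).comp L).coeff 0, hK0, ?_⟩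
  have hder : derivative (p - C K * (T ℂ n).comp L) = 0 := by
    have hcast : ((n:ℤ) - 1) = ((n-1 : ℕ) : ℤ) := by omega
    have hTd : derivative ((T ℂ n).comp L) =
        C ((n:ℂ) * β⁻¹ * 2^(n-1) * (β⁻¹)^(n-1)) *
          ∏ k ∈ Finset.Icc 1 (n-1), ((X:ℂ[X]) - C (α + β * Real.cos (k * Real.pi / n))) := by
      rw [derivative_comp, T_derivative_eq_U, hcast, U_fact n hn]
      have hdL : derivative L = C β⁻¹ := by
        simp [hL]
      have hcomp : (∏ k ∈ Finset.Icc 1 (n-1),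
          ((X:ℂ[X]) - C ((Real.cos (k * Real.pi / n) : ℝ) : ℂ))).comp L =
          C ((β⁻¹)^(n-1)) * ∏ k ∈ Finset.Icc 1 (n-1),
            ((X:ℂ[X]) - C (α + β * Real.cos (k * Real.pi / n))) := by
        rw [prod_comp]
        have : ∀ k ∈ Finset.Icc 1 (n-1),
            ((X:ℂ[X]) - C ((Real.cos (k * Real.pi / n) : ℝ) : ℂ)).comp L =
            C β⁻¹ * ((X:ℂ[X]) - C (α + β * Real.cos (k * Real.pi / n))) := by
          intro k _
          have hc : β⁻¹ * (α + β * ((Real.cos (k * Real.pi / n) : ℝ) : ℂ)) =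
              β⁻¹ * α + ((Real.cos (k * Real.pi / n) : ℝ) : ℂ) := by
            field_simp
          rw [sub_comp, X_comp, C_comp, hL, mul_sub, mul_sub, ← Polynomial.C_mul, ← Polynomial.C_mul, hc, C_add,
            sub_sub]
        rw [Finset.prod_congr rfl this, Finset.prod_mul_distrib, Finset.prod_const, ← C_pow]
        congr 1
        simp [Nat.card_Icc]
      rw [mul_comp, mul_comp, C_comp, hcomp, hdL, intCast_comp]
      rw [show (((n:ℤ) : ℂ[X])) = C ((n:ℂ)) by rw [← C_eq_intCast]; norm_num]
      simp only [← mul_assoc, ← Polynomial.C_mul]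
      congr 1
      rw [C_inj]
      ring
    rw [derivative_sub, derivative_mul, derivative_C, zero_mul, zero_add, hTd, hp',
      smul_eq_C_mul, ← mul_assoc, ← Polynomial.C_mul]
    rw [sub_eq_zero]
    congr 2
    rw [hK]
    field_simp
    have hn1 : β^n = β^(n-1) * β := by rw [← pow_succ]; congr 1; omega
    rw [hn1, one_div, inv_pow, mul_comm (β^(n-1) * β), ← mul_assoc,
      inv_mul_cancel₀ (pow_ne_zero _ hβ), one_mul]
  have h0 : (p - C K * (T ℂ n).comp L).natDegree = 0 :=
    natDegree_eq_zero_of_derivative_eq_zero hder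
  have := eq_C_of_natDegree_eq_zero h0
  linear_combination (norm := ring_nf) this



lemma two_cos (z : ℂ) : Complex.exp (z * Complex.I) + Complex.exp (-(z * Complex.I)) =
    2 * Complex.cos z := by
  rw [Complex.exp_mul_I, ← neg_mul, Complex.exp_mul_I, Complex.cos_neg, Complex.sin_neg]
  ring


end Helpers

open Polynomial in
/-- If the critical points of a degree-`n` polynomial `p` are
`α + β·cos(kπ/n)`, `k = 1, …, n−1` (with `β ≠ 0`), and the roots of `p` do not
all lie on a single real line, then the roots of `p` form an affinely regular
`n`-gon; in particular `p` has `n` distinct roots. -/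
theorem stmt_6 (n : ℕ) (hn : 3 ≤ n) (p : Polynomial ℂ) (hdeg : p.natDegree = n)
    (γ α β : ℂ) (hγ : γ ≠ 0) (hβ : β ≠ 0)
    (hp' : derivative p =
      γ • ∏ k ∈ Finset.Icc 1 (n - 1), (X - C (α + β * Real.cos (k * Real.pi / n))))
    (hline : ¬ ∃ z₀ d : ℂ, ∀ r ∈ p.roots, ∃ t : ℝ, r = z₀ + t * d) :
    ∃ u v w : ℂ, u ≠ 0 ∧ v ≠ 0 ∧ ‖u‖ ≠ ‖v‖ ∧
      p.roots = Multiset.map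
        (fun k : ℕ => u * Complex.exp (2 * Real.pi * Complex.I * k / n) +
          v * Complex.exp (-(2 * Real.pi * Complex.I * k / n)) + w)
        (Multiset.range n) ∧
      p.roots.Nodup := by
  obtain ⟨K, c, hK0, hrep⟩ := rep n hn p γ α β hγ hβ hp'
  have hnR : (0:ℝ) < n := by positivity
  have hn0 : (n:ℂ) ≠ 0 := by exact_mod_cast hnR.ne'
  have hp0 : p ≠ 0 := fun h => by rw [h, natDegree_zero] at hdeg; omega
  have heval : ∀ ψ : ℂ, p.eval (α + β * Complex.cos ψ) = K * Complex.cos (n * ψ) + c := by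
    intro ψ
    rw [hrep]
    have hL : eval (α + β * Complex.cos ψ) (C β⁻¹ * (X - C α)) = Complex.cos ψ := by
      simp only [eval_mul, eval_C, eval_sub, eval_X]
      field_simp
      ring
    rw [eval_add, eval_mul, eval_C, eval_C, eval_comp, hL]
    have := Polynomial.Chebyshev.T_complex_cos ψ (n:ℤ)
    rw [this]
    norm_num
  set lam : ℂ := -c / K with hlam
  have hKlam : K * lam + c = 0 := by rw [hlam, mul_div_assoc', mul_div_cancel_left₀ (-c) hK0]; ring
  obtain ⟨θ, hθ⟩ := Complex.cos_surjective lam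
  -- every root has the form α + β * cos φ with cos (n φ) = lam
  have hform : ∀ r ∈ p.roots, ∃ φ : ℂ, r = α + β * Complex.cos φ ∧
      Complex.cos (n * φ) = lam := by
    intro r hr
    obtain ⟨φ, hφ⟩ := Complex.cos_surjective (β⁻¹ * (r - α))
    have hrφ : r = α + β * Complex.cos φ := by rw [hφ]; field_simp; ring
    have hr0 : p.eval r = 0 := (mem_roots hp0).mp hr
    rw [hrφ, heval] at hr0
    refine ⟨φ, hrφ, ?_⟩
    rw [hlam, eq_div_iff hK0]
    linear_combination hr0
  have hIm : θ.im ≠ 0 := by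
    intro h0
    apply hline
    refine ⟨α, β, fun r hr => ?_⟩
    obtain ⟨φ, hrφ, hcos⟩ := hform r hr
    rw [← hθ] at hcos
    obtain ⟨m, hm⟩ := Complex.cos_eq_cos_iff.mp hcos
    have hφim : φ.im = 0 := by
      have h2 : ((2:ℂ) * m * Real.pi).im = 0 := by simp
      rcases hm with hm | hm <;>
      · have := congrArg Complex.im hm
        simp only [Complex.add_im, Complex.sub_im, Complex.mul_im, Complex.natCast_im,
          Complex.natCast_re, h0] at this h2
        rw [h2] at this
        simp at this
        rcases this with h | h
        · exact absurd h (by exact_mod_cast hnR.ne')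
        · linarith [h]
    have hφ : φ = (φ.re : ℂ) := Complex.ext rfl (by simp [hφim])
    have hcφ : Complex.cos φ = ((Real.cos φ.re : ℝ) : ℂ) := by
      conv_lhs => rw [hφ]
      rw [Complex.ofReal_cos]
    refine ⟨Real.cos φ.re, ?_⟩
    rw [hrφ, hcφ]
    ring
  set u : ℂ := β/2 * Complex.exp (θ * Complex.I / n) with hu
  set v : ℂ := β/2 * Complex.exp (-(θ * Complex.I / n)) with hv
  set z : ℕ → ℂ := fun k : ℕ => u * Complex.exp (2 * Real.pi * Complex.I * k / n) +
      v * Complex.exp (-(2 * Real.pi * Complex.I * k / n)) + α with hz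
  have hzcos : ∀ k : ℕ, z k = α + β * Complex.cos ((θ + 2 * Real.pi * k) / n) := by
    intro k
    have key : u * Complex.exp (2 * Real.pi * Complex.I * k / n) +
        v * Complex.exp (-(2 * Real.pi * Complex.I * k / n)) =
        β/2 * (Complex.exp (((θ + 2*Real.pi*k)/n) * Complex.I) +
          Complex.exp (-(((θ + 2*Real.pi*k)/n) * Complex.I))) := by
      rw [hu, hv,
        show ((θ + 2*Real.pi*(k:ℂ))/n) * Complex.I =
          θ * Complex.I / n + 2 * Real.pi * Complex.I * k / n by ring,
        show -((θ * Complex.I / n + 2 * Real.pi * Complex.I * (k:ℂ) / n)) =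
          -(θ * Complex.I / n) + -(2 * Real.pi * Complex.I * (k:ℂ) / n) by ring,
        Complex.exp_add, Complex.exp_add]
      ring
    show u * Complex.exp (2 * Real.pi * Complex.I * k / n) +
      v * Complex.exp (-(2 * Real.pi * Complex.I * k / n)) + α = _
    rw [key, two_cos]
    ring
  have hroots_z : ∀ k : ℕ, p.eval (z k) = 0 := by
    intro k
    rw [hzcos, heval, show (n:ℂ) * ((θ + 2*Real.pi*(k:ℂ))/n) = θ + 2*Real.pi*k by
      field_simp]
    rw [show θ + 2*(Real.pi:ℂ)*(k:ℂ) = θ + ((k:ℕ):ℤ) * (2*(Real.pi:ℂ)) by push_cast; ring,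
      Complex.cos_add_int_mul_two_pi, hθ, hKlam]
  have hu0 : u ≠ 0 := mul_ne_zero (div_ne_zero hβ two_ne_zero) (Complex.exp_ne_zero _)
  have hv0 : v ≠ 0 := mul_ne_zero (div_ne_zero hβ two_ne_zero) (Complex.exp_ne_zero _)
  have habs : ‖u‖ ≠ ‖v‖ := by
    rw [hu, hv, norm_mul, norm_mul, Complex.norm_exp, Complex.norm_exp,
      show (θ * Complex.I / n).re = -(θ.im)/n by
        rw [show (n:ℂ) = ((n:ℝ):ℂ) by push_cast; rfl, Complex.div_ofReal_re]; simp,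
      show (-(θ * Complex.I / n)).re = θ.im/n by
        rw [Complex.neg_re, show (n:ℂ) = ((n:ℝ):ℂ) by push_cast; rfl,
          Complex.div_ofReal_re]; simp; ring]
    intro h
    have hb : ‖β/2‖ ≠ 0 := by
      simpa using hβ
    have h2 := mul_left_cancel₀ hb h
    have h3 := Real.exp_eq_exp.mp h2
    field_simp at h3
    have h4 : θ.im * (n:ℝ) = 0 := by linarith
    rcases mul_eq_zero.mp h4 with h5 | h5
    · exact hIm h5
    · exact hnR.ne' h5
  have habs1 : ∀ t : ℕ, ‖Complex.exp (2 * Real.pi * Complex.I * t / n)‖ = 1 := by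
    intro t
    rw [show 2 * Real.pi * Complex.I * (t:ℂ) / n = ((2*Real.pi*t/(n:ℝ) : ℝ) : ℂ) * Complex.I by
      push_cast; ring]
    exact Complex.norm_exp_ofReal_mul_I _
  have hzinj : ∀ j < n, ∀ k < n, z j = z k → j = k := by
    intro j hj k hk h
    set a := Complex.exp (2 * Real.pi * Complex.I * (j:ℂ) / n) with ha
    set b := Complex.exp (2 * Real.pi * Complex.I * (k:ℂ) / n) with hb
    have ha0 : a ≠ 0 := Complex.exp_ne_zero _
    have hb0 : b ≠ 0 := Complex.exp_ne_zero _
    have h' : u * a + v * a⁻¹ = u * b + v * b⁻¹ := by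
      have e1 : Complex.exp (-(2 * Real.pi * Complex.I * (j:ℂ) / n)) = a⁻¹ := by
        rw [Complex.exp_neg, ha]
      have e2 : Complex.exp (-(2 * Real.pi * Complex.I * (k:ℂ) / n)) = b⁻¹ := by
        rw [Complex.exp_neg, hb]
      have := h
      simp only [hz] at this
      rw [e1, e2] at this
      exact add_right_cancel this
    have key2 : (a - b) * (u * (a*b) - v) = 0 := by
      have hai : a * a⁻¹ = 1 := mul_inv_cancel₀ ha0
      have hbi : b * b⁻¹ = 1 := mul_inv_cancel₀ hb0
      linear_combination (a*b) * h' - v*b*hai + v*a*hbi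
    rcases mul_eq_zero.mp key2 with hab | huv
    · have hab' : a = b := sub_eq_zero.mp hab
      obtain ⟨m, hm⟩ := Complex.exp_eq_exp_iff_exists_int.mp (ha ▸ hb ▸ hab')
      have h2πI : (2:ℂ) * Real.pi * Complex.I ≠ 0 := by
        simp [Real.pi_ne_zero, Complex.I_ne_zero]
      have hm' : (2 * (Real.pi:ℂ) * Complex.I) * j =
          (2 * (Real.pi:ℂ) * Complex.I) * ((k:ℂ) + m * n) := by
        field_simp at hm
        linear_combination (2 * (Real.pi:ℂ) * Complex.I) * hm
      have hC : (j:ℂ) = (k:ℂ) + m * n := mul_left_cancel₀ h2πI hm'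
      have hZ : (j:ℤ) = k + m * n := by exact_mod_cast hC
      have hj' : (j:ℤ) < n := by exact_mod_cast hj
      have hk' : (k:ℤ) < n := by exact_mod_cast hk
      have hj0 : (0:ℤ) ≤ j := Int.natCast_nonneg j
      have hk0 : (0:ℤ) ≤ k := Int.natCast_nonneg k
      have hnZ : (0:ℤ) < n := by exact_mod_cast (by omega : 0 < n)
      have hm0 : m = 0 := by
        rcases lt_trichotomy m 0 with hmlt | hmeq | hmgt
        · have h1 : m ≤ -1 := by omega
          have h2 : m * (n:ℤ) ≤ (-1) * n := mul_le_mul_of_nonneg_right h1 hnZ.le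
          linarith
        · exact hmeq
        · have h1 : (1:ℤ) ≤ m := hmgt
          have h2 : (1:ℤ) * n ≤ m * n := mul_le_mul_of_nonneg_right h1 hnZ.le
          linarith
      rw [hm0] at hZ
      simp at hZ
      exact_mod_cast hZ
    · exfalso
      apply habs
      have habsuv : ‖u‖ * (‖a‖ * ‖b‖) = ‖v‖ := by
        rw [← norm_mul, ← norm_mul]
        exact congrArg norm (sub_eq_zero.mp huv)
      rw [ha, hb, habs1, habs1] at habsuv
      simpa using habsuv
  have hcardroots : Multiset.card p.roots = n := by
    rw [splits_iff_card_roots.mp (IsAlgClosed.splits p), hdeg]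
  have hnd : (Multiset.map z (Multiset.range n)).Nodup :=
    Multiset.Nodup.map_on
      (fun j hj k hk h => hzinj j (Multiset.mem_range.mp hj) k (Multiset.mem_range.mp hk) h)
      (Multiset.nodup_range n)
  have hle : Multiset.map z (Multiset.range n) ≤ p.roots := by
    rw [Multiset.le_iff_subset hnd]
    intro x hx
    obtain ⟨k, _, rfl⟩ := Multiset.mem_map.mp hx
    exact (mem_roots hp0).mpr (hroots_z k)
  have heq : Multiset.map z (Multiset.range n) = p.roots :=
    Multiset.eq_of_le_of_card_le hle (by simp [hcardroots])
  refine ⟨u, v, α, hu0, hv0, habs, ?_, ?_⟩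
  · rw [← heq, hz]
  · rw [← heq]
    exact hnd
end

section
/- Let u, v, s be complex numbers with s² = u·v, and let t be real. Then |u·e^{it} + v·e^{−it} − 2s| + |u·e^{it} + v·e^{−it} + 2s| = 2(|u| + |v|). Consequently, the curve t ↦ u·e^{it} + v·e^{−it} + w lies on the ellipse with foci w − 2s and w + 2s and string length 2(|u| + |v|). -/
lemma abs_sq_add_abs_sq (a b : ℂ) :
    ‖(a - b) ^ 2‖ + ‖(a + b) ^ 2‖ =
      2 * (‖a‖ ^ 2 + ‖b‖ ^ 2) := by
  have := parallelogram_law_with_norm (𝕜 := ℝ) (E := ℂ) a b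
  simp only [norm_pow] at *
  ring_nf
  ring_nf at this
  linarith

/-- If `s² = u·v`, then for all real `t`,
`|u·e^{it} + v·e^{−it} − 2s| + |u·e^{it} + v·e^{−it} + 2s| = 2(|u| + |v|)`;
hence the curve `t ↦ u·e^{it} + v·e^{−it} + w` lies on the ellipse with foci
`w ± 2s` and string length `2(|u| + |v|)`. -/
theorem stmt_7 (u v s : ℂ) (hs : s ^ 2 = u * v) (t : ℝ) :
    ‖u * Complex.exp (Complex.I * t) + v * Complex.exp (-(Complex.I * t)) - 2 * s‖ +
      ‖u * Complex.exp (Complex.I * t) + v * Complex.exp (-(Complex.I * t)) + 2 * s‖ =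
      2 * (‖u‖ + ‖v‖) := by
  obtain ⟨a, ha⟩ : ∃ a : ℂ, a ^ 2 = u * Complex.exp (Complex.I * t) :=
    IsAlgClosed.exists_pow_nat_eq _ zero_lt_two
  obtain ⟨b, hb⟩ : ∃ b : ℂ, b ^ 2 = v * Complex.exp (-(Complex.I * t)) :=
    IsAlgClosed.exists_pow_nat_eq _ zero_lt_two
  have habs : (a * b) ^ 2 = s ^ 2 := by
    rw [mul_pow, ha, hb, hs]
    rw [show u * Complex.exp (Complex.I * t) * (v * Complex.exp (-(Complex.I * t)))
      = u * v * (Complex.exp (Complex.I * t) * Complex.exp (-(Complex.I * t))) by ring,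
      ← Complex.exp_add, add_neg_cancel, Complex.exp_zero, mul_one]
  have hau : ‖a‖ ^ 2 = ‖u‖ := by
    rw [← norm_pow, ha, norm_mul, Complex.norm_exp]
    simp [Complex.mul_re]
  have hbv : ‖b‖ ^ 2 = ‖v‖ := by
    rw [← norm_pow, hb, norm_mul, Complex.norm_exp]
    simp [Complex.mul_re]
  rcases sq_eq_sq_iff_eq_or_eq_neg.mp habs with h | h
  · have key : u * Complex.exp (Complex.I * t) + v * Complex.exp (-(Complex.I * t)) - 2 * s
        = (a - b) ^ 2 := by rw [← ha, ← hb, ← h]; ring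
    have key2 : u * Complex.exp (Complex.I * t) + v * Complex.exp (-(Complex.I * t)) + 2 * s
        = (a + b) ^ 2 := by rw [← ha, ← hb, ← h]; ring
    rw [key, key2, ← hau, ← hbv, abs_sq_add_abs_sq]
  · have h' : a * b = -s := h
    have key : u * Complex.exp (Complex.I * t) + v * Complex.exp (-(Complex.I * t)) - 2 * s
        = (a + b) ^ 2 := by
      have : 2 * s = -(2 * (a * b)) := by rw [h']; ring
      rw [← ha, ← hb, this]; ring
    have key2 : u * Complex.exp (Complex.I * t) + v * Complex.exp (-(Complex.I * t)) + 2 * s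
        = (a - b) ^ 2 := by
      have : 2 * s = -(2 * (a * b)) := by rw [h']; ring
      rw [← ha, ← hb, this]; ring
    rw [key, key2, ← hau, ← hbv, ← abs_sq_add_abs_sq, add_comm]
end

section
/- Let n ≥ 3 be a natural number, let u, v, w, s be complex numbers with s² = u·v, and define z_k = u·e^{2πik/n} + v·e^{−2πik/n} + w for k ∈ ℤ. Then every midpoint m_k = (z_k + z_{k+1})/2 of consecutive vertices satisfies |m_k − (w + 2s·cos(π/n))| + |m_k − (w − 2s·cos(π/n))| = 2(|u| + |v|)·cos(π/n). That is, all midpoints of the sides of the affinely regular polygon z_0, …, z_{n−1} lie on a single ellipse with foci w ± 2s·cos(π/n). -/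
lemma para_aux (α β : ℂ) :
    ‖(α - β) ^ 2‖ + ‖(α + β) ^ 2‖ =
      2 * (‖α ^ 2‖ + ‖β ^ 2‖) := by
  simp only [norm_pow, Complex.sq_norm, Complex.normSq_sub, Complex.normSq_add]
  ring

lemma key_aux (a b s : ℂ) (h : s ^ 2 = a * b) :
    ‖a + b - 2 * s‖ + ‖a + b + 2 * s‖ =
      2 * (‖a‖ + ‖b‖) := by
  obtain ⟨α, hα⟩ := IsAlgClosed.exists_pow_nat_eq a (n := 2) (by norm_num)
  obtain ⟨β, hβ⟩ := IsAlgClosed.exists_pow_nat_eq b (n := 2) (by norm_num)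
  have h3 : (α * β - s) * (α * β + s) = 0 := by
    have : s ^ 2 = α ^ 2 * β ^ 2 := by rw [h, hα, hβ]
    linear_combination -this
  rcases mul_eq_zero.mp h3 with h4 | h4
  · have e1 : a + b - 2 * s = (α - β) ^ 2 := by
      have hs' : s = α * β := by linear_combination -h4
      rw [hs', ← hα, ← hβ]; ring
    have e2 : a + b + 2 * s = (α + β) ^ 2 := by
      have hs' : s = α * β := by linear_combination -h4
      rw [hs', ← hα, ← hβ]; ring
    rw [e1, e2, para_aux, hα, hβ]
  · have e1 : a + b - 2 * s = (α + β) ^ 2 := by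
      have hs' : s = -(α * β) := by linear_combination h4
      rw [hs', ← hα, ← hβ]; ring
    have e2 : a + b + 2 * s = (α - β) ^ 2 := by
      have hs' : s = -(α * β) := by linear_combination h4
      rw [hs', ← hα, ← hβ]; ring
    rw [e1, e2, add_comm, para_aux, hα, hβ]

/-- For the affinely regular polygon with vertices
`z_k = u·e^{2πik/n} + v·e^{−2πik/n} + w` (where `s² = u·v`), every midpoint
`(z_k + z_{k+1})/2` of consecutive vertices lies on the ellipse with foci
`w ± 2s·cos(π/n)` and string length `2(|u| + |v|)·cos(π/n)`. -/
theorem stmt_8 (n : ℕ) (hn : 3 ≤ n) (u v w s : ℂ) (hs : s ^ 2 = u * v)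
    (z : ℤ → ℂ)
    (hz : ∀ k : ℤ, z k = u * Complex.exp (2 * Real.pi * Complex.I * k / n) +
      v * Complex.exp (-(2 * Real.pi * Complex.I * k / n)) + w) :
    ∀ k : ℤ,
      ‖(z k + z (k + 1)) / 2 - (w + 2 * s * Real.cos (Real.pi / n))‖ +
        ‖(z k + z (k + 1)) / 2 - (w - 2 * s * Real.cos (Real.pi / n))‖ =
        2 * (‖u‖ + ‖v‖) * Real.cos (Real.pi / n) := by
  intro k
  have hn0 : (n : ℂ) ≠ 0 := by
    exact_mod_cast Nat.cast_ne_zero.mpr (by omega)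
  set c : ℝ := Real.cos (Real.pi / n) with hcdef
  have hcpos : 0 ≤ c := by
    apply Real.cos_nonneg_of_mem_Icc
    constructor
    · have : 0 ≤ Real.pi / n := by positivity
      linarith [Real.pi_pos]
    · have h1 : Real.pi / n ≤ Real.pi / 3 := by
        apply div_le_div_of_nonneg_left Real.pi_pos.le (by norm_num)
        exact_mod_cast hn
      have h2 : Real.pi / 3 ≤ Real.pi / 2 := by
        apply div_le_div_of_nonneg_left Real.pi_pos.le (by norm_num) (by norm_num)
      linarith
  set e : ℂ := Complex.exp (Real.pi * Complex.I * (2 * k + 1) / n) with hedef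
  set f : ℂ := Complex.exp (Real.pi / n * Complex.I) with hfdef
  have he0 : e ≠ 0 := Complex.exp_ne_zero _
  have hf0 : f ≠ 0 := Complex.exp_ne_zero _
  have hcf : (c : ℂ) * 2 = f + f⁻¹ := by
    have h := Complex.two_cos (x := ((Real.pi : ℂ) / n))
    rw [neg_mul] at h
    rw [hcdef, Complex.ofReal_cos, hfdef, ← Complex.exp_neg]
    push_cast
    linear_combination h
  have hEk : Complex.exp (2 * Real.pi * Complex.I * k / n) = e * f⁻¹ := by
    rw [hedef, hfdef, ← Complex.exp_neg, ← Complex.exp_add]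
    congr 1
    field_simp
    ring
  have hEk1 : Complex.exp (2 * Real.pi * Complex.I * (k + 1) / n) = e * f := by
    rw [hedef, hfdef, ← Complex.exp_add]
    congr 1
    field_simp
    ring
  have habse : ‖e‖ = 1 := by
    have : e = Complex.exp ((Real.pi * (2 * (k:ℝ) + 1) / n : ℝ) * Complex.I) := by
      rw [hedef]; congr 1; push_cast; ring
    rw [this, Complex.norm_exp_ofReal_mul_I]
  have hm1 : (z k + z (k + 1)) / 2 - (w + 2 * s * (c : ℂ)) =
      (c : ℂ) * (u * e + v * e⁻¹ - 2 * s) := by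
    rw [hz k, hz (k + 1), Complex.exp_neg, Complex.exp_neg]
    push_cast
    rw [hEk, hEk1, mul_inv, mul_inv, inv_inv]
    linear_combination (-(u * e + v * e⁻¹) / 2) * hcf
  have hm2 : (z k + z (k + 1)) / 2 - (w - 2 * s * (c : ℂ)) =
      (c : ℂ) * (u * e + v * e⁻¹ + 2 * s) := by
    rw [hz k, hz (k + 1), Complex.exp_neg, Complex.exp_neg]
    push_cast
    rw [hEk, hEk1, mul_inv, mul_inv, inv_inv]
    linear_combination (-(u * e + v * e⁻¹) / 2) * hcf
  have hkey := key_aux (u * e) (v * e⁻¹) s (by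
    rw [hs]
    field_simp)
  have habsa : ‖u * e‖ = ‖u‖ := by
    rw [norm_mul, habse, mul_one]
  have habsb : ‖v * e⁻¹‖ = ‖v‖ := by
    rw [norm_mul, norm_inv, habse, inv_one, mul_one]
  rw [hm1, hm2, norm_mul, norm_mul, Complex.norm_real, Real.norm_eq_abs, abs_of_nonneg hcpos]
  rw [habsa, habsb] at hkey
  calc c * ‖u * e + v * e⁻¹ - 2 * s‖ + c * ‖u * e + v * e⁻¹ + 2 * s‖
      = c * (‖u * e + v * e⁻¹ - 2 * s‖ + ‖u * e + v * e⁻¹ + 2 * s‖) := by ring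
    _ = c * (2 * (‖u‖ + ‖v‖)) := by rw [hkey]
    _ = 2 * (‖u‖ + ‖v‖) * c := by ring
end

section
/- Let n ≥ 1, let u, v, w, s be complex numbers with u·v ≠ 0 and s² = u·v, and let p = ∏_{k=0}^{n−1}(X − (u·e^{2πik/n} + v·e^{−2πik/n} + w)) be the monic polynomial whose roots are the vertices of the affinely regular polygon determined by u, v, w. Then the derivative of p is p' = n·∏_{k=1}^{n−1}(X − (w + 2s·cos(kπ/n))); in particular the critical points of p are w + 2s·cos(kπ/n), k = 1, …, n − 1. -/
open Polynomial Complex Polynomial.Chebyshev Finset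

lemma U_natDegree_le (m : ℕ) : (U ℂ (m : ℤ)).natDegree ≤ m := by
  induction m using Nat.twoStepInduction with
  | zero => simp [U_zero]
  | one => simpa [U_one] using natDegree_mul_le.trans (by simp)
  | more m ih1 ih2 =>
    rw [show ((m+2:ℕ):ℤ) = (m:ℤ)+2 by push_cast; ring, U_add_two]
    refine (natDegree_sub_le _ _).trans (max_le ?_ (ih1.trans (by omega)))
    calc (2*X*U ℂ ((m:ℤ)+1)).natDegree ≤ (2*X : ℂ[X]).natDegree + (U ℂ ((m:ℤ)+1)).natDegree :=
          natDegree_mul_le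
    _ ≤ 1 + (m+1) := by
        gcongr
        · exact natDegree_mul_le.trans (by simp)
        · exact_mod_cast (show ((m:ℤ)+1) = ((m+1:ℕ):ℤ) by push_cast; ring) ▸ ih2
    _ = m + 2 := by omega

lemma U_coeff (m : ℕ) : (U ℂ (m : ℤ)).coeff m = 2^m := by
  induction m using Nat.twoStepInduction with
  | zero => simp [U_zero]
  | one => simp [U_one, coeff_X, mul_comm]
  | more m ih1 ih2 =>
    rw [show ((m+2:ℕ):ℤ) = (m:ℤ)+2 by push_cast; ring, U_add_two]
    rw [coeff_sub, coeff_eq_zero_of_natDegree_lt ((U_natDegree_le m).trans_lt (by omega)),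
      sub_zero, show (2*X*U ℂ ((m:ℤ)+1) : ℂ[X]) = 2*(X*U ℂ ((m:ℤ)+1)) by ring]
    rw [coeff_ofNat_mul, show m+2 = (m+1)+1 by rfl, coeff_X_mul]
    rw [show ((m:ℤ)+1) = ((m+1:ℕ):ℤ) by push_cast; ring, ih2]
    ring

lemma prod_root_unity (n : ℕ) (hn : 1 ≤ n) (x : ℂ) :
    ∏ k ∈ range n, (x - Complex.exp (2 * Real.pi * I / n) ^ k) = x ^ n - 1 := by
  set ζ : ℂ := Complex.exp (2 * Real.pi * I / n)
  have hζ : IsPrimitiveRoot ζ n := Complex.isPrimitiveRoot_exp n (by omega)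
  have hpoly : ((X : ℂ[X]) ^ n - C 1) = ∏ k ∈ range n, (X - C (ζ ^ k)) := by
    have hm : ((X : ℂ[X]) ^ n - C 1).Monic := monic_X_pow_sub_C 1 (by omega)
    have hroots : ((X : ℂ[X]) ^ n - C 1).roots = (Multiset.range n).map (fun k => ζ ^ k * 1) :=
      hζ.nthRoots_eq (one_pow n)
    have hcard : Multiset.card ((X : ℂ[X]) ^ n - C 1).roots = ((X : ℂ[X]) ^ n - C 1).natDegree := by
      rw [hroots, natDegree_X_pow_sub_C]; simp
    have := prod_multiset_X_sub_C_of_monic_of_roots_card_eq hm hcard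
    rw [hroots] at this
    rw [← this, Finset.prod_eq_multiset_prod, Finset.range_val, Multiset.map_map]
    simp
  have := congrArg (eval x) hpoly
  simpa [eval_prod] using this.symm

lemma prod_scaled (n : ℕ) (hn : 1 ≤ n) (a x : ℂ) (ha : a ≠ 0) :
    ∏ k ∈ range n, (x - a * Complex.exp (2 * Real.pi * I / n) ^ k) = x ^ n - a ^ n := by
  set ζ : ℂ := Complex.exp (2 * Real.pi * I / n)
  calc ∏ k ∈ range n, (x - a * ζ ^ k) = ∏ k ∈ range n, (a * (x / a - ζ ^ k)) := by
        refine Finset.prod_congr rfl fun k _ => ?_; field_simp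
    _ = a ^ n * ∏ k ∈ range n, (x / a - ζ ^ k) := by
        rw [Finset.prod_mul_distrib, Finset.prod_const, Finset.card_range]
    _ = a ^ n * ((x / a) ^ n - 1) := by rw [prod_root_unity n hn]
    _ = x ^ n - a ^ n := by rw [div_pow, mul_sub, mul_one, mul_div_cancel₀ _ (pow_ne_zero n ha)]

-- Step C : factorization of U
lemma U_factor (n : ℕ) (hn : 1 ≤ n) :
    U ℂ ((n : ℤ) - 1) = C ((2:ℂ)^(n-1)) *
      ∏ k ∈ Finset.Icc 1 (n-1), (X - C ((Real.cos (k * Real.pi / n) : ℝ) : ℂ)) := by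
  rcases Nat.eq_or_lt_of_le hn with h1 | h2
  · simp [← h1, U_zero]
  -- n ≥ 2
  have hn0 : (0:ℝ) < n := by positivity
  set m := n - 1 with hm
  have hmn : (n : ℤ) - 1 = (m : ℤ) := by omega
  set Q : ℂ[X] := ∏ k ∈ Finset.Icc 1 (n-1), (X - C ((Real.cos (k * Real.pi / n) : ℝ) : ℂ)) with hQ
  have hQm : Q.Monic := monic_prod_of_monic _ _ fun k _ => monic_X_sub_C _
  have hcard : #(Finset.Icc 1 (n-1)) = m := by rw [Nat.card_Icc]; omega
  have hQdeg : Q.natDegree = m := by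
    rw [hQ, natDegree_prod _ _ (fun k _ => X_sub_C_ne_zero _)]
    simp [natDegree_X_sub_C, hcard]
  have hUdeg : (U ℂ ((n:ℤ)-1)).natDegree = m := by
    refine le_antisymm (hmn ▸ U_natDegree_le m) ?_
    refine le_natDegree_of_ne_zero ?_
    rw [hmn, U_coeff]; exact pow_ne_zero _ two_ne_zero
  have hUlead : (U ℂ ((n:ℤ)-1)).leadingCoeff = 2^m := by
    rw [leadingCoeff, hUdeg, hmn, U_coeff]
  have hU0 : U ℂ ((n:ℤ)-1) ≠ 0 := fun h => pow_ne_zero m (two_ne_zero (α := ℂ)) (by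
    rw [← hUlead, h, leadingCoeff_zero])
  -- injectivity of the cos values
  have hinj : Set.InjOn (fun k : ℕ => ((Real.cos (k * Real.pi / n) : ℝ) : ℂ)) (Finset.Icc 1 (n-1)) := by
    intro k hk l hl h
    simp only [Finset.coe_Icc, Set.mem_Icc] at hk hl
    have harg : ∀ j : ℕ, 1 ≤ j → j ≤ n - 1 → (j * Real.pi / n) ∈ Set.Icc 0 Real.pi := by
      intro j h1 h2
      constructor
      · positivity
      · rw [div_le_iff₀ hn0]
        have : (j:ℝ) ≤ n := by exact_mod_cast Nat.le_of_lt_succ (by omega)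
        nlinarith [Real.pi_pos]
    simp only at h
    have h' : Real.cos (k * Real.pi / n) = Real.cos (l * Real.pi / n) := by exact_mod_cast h
    have heq := Real.injOn_cos (harg k hk.1 hk.2) (harg l hl.1 hl.2) h'
    field_simp at heq
    exact_mod_cast heq
  -- both sides vanish at the cos values
  have heval : ∀ k ∈ Finset.Icc 1 (n-1),
      (U ℂ ((n:ℤ)-1)).eval ((Real.cos (k * Real.pi / n) : ℝ) : ℂ) =
      (C ((2:ℂ)^(n-1)) * Q).eval ((Real.cos (k * Real.pi / n) : ℝ) : ℂ) := by
    intro k hk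
    simp only [Finset.mem_Icc] at hk
    have hsin : Complex.sin ((k * Real.pi / n : ℝ) : ℂ) ≠ 0 := by
      rw [← Complex.ofReal_sin]
      simp only [ne_eq, Complex.ofReal_eq_zero]
      have : 0 < Real.sin (k * Real.pi / n) := by
        apply Real.sin_pos_of_pos_of_lt_pi
        · have : (1:ℝ) ≤ k := by exact_mod_cast hk.1
          positivity
        · rw [div_lt_iff₀ hn0]
          have : (k:ℝ) < n := by exact_mod_cast (by omega : k < n)
          nlinarith [Real.pi_pos]
      linarith
    have hU := U_complex_cos ((k * Real.pi / n : ℝ) : ℂ) ((n:ℤ)-1)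
    rw [show (((n:ℤ)-1 : ℤ) : ℂ) + 1 = (n : ℂ) by push_cast; ring] at hU
    have hsin2 : Complex.sin ((n:ℂ) * ((k * Real.pi / n : ℝ) : ℂ)) = 0 := by
      have hn0c : (n:ℂ) ≠ 0 := Nat.cast_ne_zero.2 (by omega)
      rw [show ((n:ℂ) * ((k * Real.pi / n : ℝ) : ℂ)) = ((k * Real.pi : ℝ) : ℂ) by
        push_cast; field_simp]
      rw [← Complex.ofReal_sin]
      simp [Real.sin_nat_mul_pi]
    rw [hsin2] at hU
    have hUz : (U ℂ ((n:ℤ)-1)).eval (Complex.cos ((k * Real.pi / n : ℝ) : ℂ)) = 0 :=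
      by
        rcases mul_eq_zero.1 hU with h | h
        · exact h
        · exact absurd h hsin
    rw [← Complex.ofReal_cos] at hUz
    rw [hUz]
    rw [eval_mul, eval_prod]
    rw [Finset.prod_eq_zero (Finset.mem_Icc.2 hk)]
    · ring
    · simp
  -- degree comparison
  have hQ0 : Q ≠ 0 := hQm.ne_zero
  have hdeg : (U ℂ ((n:ℤ)-1) - C ((2:ℂ)^(n-1)) * Q).degree < (#(Finset.Icc 1 (n-1)) : WithBot ℕ) := by
    have hc2 : ((2:ℂ)^(n-1)) ≠ 0 := pow_ne_zero _ two_ne_zero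
    have hCQ0 : C ((2:ℂ)^(n-1)) * Q ≠ 0 := mul_ne_zero (by simpa using hc2) hQ0
    have hCQlead : (C ((2:ℂ)^(n-1)) * Q).leadingCoeff = 2^m := by
      rw [leadingCoeff_mul, leadingCoeff_C, hQm.leadingCoeff, mul_one, hm]
    have hUdeg' : (U ℂ ((n:ℤ)-1)).degree = (m : WithBot ℕ) := by
      rw [degree_eq_natDegree hU0, hUdeg]
    have hCQdeg : (C ((2:ℂ)^(n-1)) * Q).degree = (m : WithBot ℕ) := by
      rw [degree_eq_natDegree hCQ0, natDegree_mul (by simpa using hc2) hQ0, natDegree_C, hQdeg]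
      norm_num
    have := degree_sub_lt (hUdeg'.trans hCQdeg.symm) hU0 (hUlead.trans hCQlead.symm)
    rw [hUdeg'] at this
    rwa [hcard]
  exact Polynomial.eq_of_degree_sub_lt_of_eval_index_eq _ hinj hdeg heval

lemma poly_eq_T (n : ℕ) (hn : 1 ≤ n) (u v w s : ℂ) (hu : u ≠ 0) (hv : v ≠ 0) (hs0 : s ≠ 0)
    (hs : s ^ 2 = u * v) :
    ∏ k ∈ range n, (X - C (u * Complex.exp (2 * Real.pi * I * k / n) +
        v * Complex.exp (-(2 * Real.pi * I * k / n)) + w))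
      = C (2 * s ^ n) * (T ℂ n).comp (C (2*s)⁻¹ * (X - C w)) - C (u ^ n + v ^ n) := by
  apply Polynomial.funext
  intro z
  obtain ⟨θ, hθ⟩ := Complex.cos_surjective ((2*s)⁻¹ * (z - w))
  set ζ : ℂ := Complex.exp (2 * Real.pi * I / n) with hζdef
  have hexp : ∀ k : ℕ, Complex.exp (2 * Real.pi * I * k / n) = ζ ^ k := by
    intro k
    rw [hζdef, ← Complex.exp_nat_mul]
    ring_nf
  have hexp' : ∀ k : ℕ, Complex.exp (-(2 * Real.pi * I * k / n)) = (ζ ^ k)⁻¹ := by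
    intro k; rw [Complex.exp_neg, hexp]
  have hζk : ∀ k : ℕ, ζ ^ k ≠ 0 := fun k => pow_ne_zero _ (Complex.exp_ne_zero _)
  set A := s * Complex.exp (θ * I) with hAdef
  set B := s * Complex.exp (-(θ * I)) with hBdef
  have hAB : A * B = s ^ 2 := by
    rw [hAdef, hBdef, show s * Complex.exp (θ*I) * (s * Complex.exp (-(θ*I)))
      = s^2 * (Complex.exp (θ*I) * Complex.exp (-(θ*I))) by ring, ← Complex.exp_add]
    simp
  have hcos2 : Complex.exp (θ*I) + Complex.exp (-(θ*I)) = 2 * Complex.cos θ := by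
    rw [Complex.cos]; ring
  have hsum : A + B = z - w := by
    calc A + B = s * (Complex.exp (θ*I) + Complex.exp (-(θ*I))) := by rw [hAdef, hBdef]; ring
    _ = s * (2 * Complex.cos θ) := by rw [hcos2]
    _ = 2*s*((2*s)⁻¹ * (z-w)) := by rw [hθ]; ring
    _ = z - w := by field_simp
  have hfac : ∀ k ∈ range n, (z - (u * ζ^k + v * (ζ^k)⁻¹ + w)) * (u * ζ^k)
      = (-1) * ((A - u*ζ^k) * (B - u*ζ^k)) := by
    intro k _
    have h1 : (ζ^k) * (ζ^k)⁻¹ = 1 := mul_inv_cancel₀ (hζk k)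
    have h2 : (A - u*ζ^k)*(B - u*ζ^k) = A*B - (A+B)*(u*ζ^k) + u^2*(ζ^k)^2 := by ring
    rw [h2, hAB, hsum, hs]
    linear_combination (-(u*v)) * h1
  have hPu : (∏ k ∈ range n, (z - (u * ζ^k + v * (ζ^k)⁻¹ + w))) * (∏ k ∈ range n, (u * ζ^k))
      = (-1)^n * ((A^n - u^n) * (B^n - u^n)) := by
    rw [← Finset.prod_mul_distrib, Finset.prod_congr rfl hfac, Finset.prod_mul_distrib,
      Finset.prod_mul_distrib, Finset.prod_const, Finset.card_range,
      prod_scaled n hn u A hu, prod_scaled n hn u B hu]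
  have hPu2 : (-1:ℂ)^n * (∏ k ∈ range n, (u * ζ^k)) = - u^n := by
    have := prod_scaled n hn u 0 hu
    rw [Finset.prod_congr rfl (fun k _ => (show (0:ℂ) - u * ζ^k = (-1) * (u * ζ^k) by ring)),
      Finset.prod_mul_distrib, Finset.prod_const, Finset.card_range, zero_pow (by omega)] at this
    rw [this]; ring
  have key : (∏ k ∈ range n, (z - (u * ζ^k + v * (ζ^k)⁻¹ + w))) * (- u^n)
      = (A^n - u^n) * (B^n - u^n) := by
    calc (∏ k ∈ range n, (z - (u * ζ^k + v * (ζ^k)⁻¹ + w))) * (- u^n)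
        = (∏ k ∈ range n, (z - (u * ζ^k + v * (ζ^k)⁻¹ + w))) *
            ((-1:ℂ)^n * (∏ k ∈ range n, (u * ζ^k))) := by rw [hPu2]
    _ = (-1:ℂ)^n * ((∏ k ∈ range n, (z - (u * ζ^k + v * (ζ^k)⁻¹ + w))) *
            (∏ k ∈ range n, (u * ζ^k))) := by ring
    _ = (-1:ℂ)^n * ((-1)^n * ((A^n - u^n) * (B^n - u^n))) := by rw [hPu]
    _ = ((-1:ℂ)^n)^2 * ((A^n - u^n) * (B^n - u^n)) := by ring
    _ = (A^n - u^n) * (B^n - u^n) := by rw [← pow_mul, mul_comm n 2, pow_mul]; norm_num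
  have hABn : A^n * B^n = u^n * v^n := by rw [← mul_pow, hAB, hs, mul_pow]
  have hcosn : 2 * s^n * Complex.cos ((n:ℂ) * θ) = A^n + B^n := by
    rw [Complex.cos, hAdef, hBdef, mul_pow, mul_pow, ← Complex.exp_nat_mul, ← Complex.exp_nat_mul]
    rw [show (n:ℂ) * (θ * I) = (n:ℂ)*θ*I by ring, show (n:ℂ) * -(θ * I) = -((n:ℂ)*θ*I) by ring]
    ring
  have hP : (∏ k ∈ range n, (z - (u * ζ^k + v * (ζ^k)⁻¹ + w)))
      = 2 * s^n * Complex.cos ((n:ℂ) * θ) - (u^n + v^n) := by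
    rw [hcosn]
    refine mul_right_cancel₀ (neg_ne_zero.2 (pow_ne_zero n hu)) ?_
    rw [key]
    linear_combination hABn
  rw [eval_prod, eval_sub, eval_mul, eval_C, eval_comp, eval_mul, eval_C, eval_sub, eval_X,
    eval_C, eval_C, ← hθ, T_complex_cos]
  rw [Finset.prod_congr rfl (fun k _ => by rw [eval_sub, eval_X, eval_C, hexp k, hexp' k])]
  rw [hP]
  push_cast
  ring

open Polynomial in
/-- The monic polynomial whose roots are the vertices
`u·e^{2πik/n} + v·e^{−2πik/n} + w`, `k = 0, …, n−1`, of an affinely regular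
polygon (with `u·v ≠ 0` and `s² = u·v`) has derivative
`n·∏_{k=1}^{n−1}(X − (w + 2s·cos(kπ/n)))`; in particular its critical points
are `w + 2s·cos(kπ/n)`, `k = 1, …, n−1`. -/
theorem stmt_11 (n : ℕ) (hn : 1 ≤ n) (u v w s : ℂ) (huv : u * v ≠ 0)
    (hs : s ^ 2 = u * v) (p : Polynomial ℂ)
    (hp : p = ∏ k ∈ Finset.range n,
      (X - C (u * Complex.exp (2 * Real.pi * Complex.I * k / n) +
        v * Complex.exp (-(2 * Real.pi * Complex.I * k / n)) + w))) :
    derivative p = (n : ℂ) •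
      ∏ k ∈ Finset.Icc 1 (n - 1), (X - C (w + 2 * s * Real.cos (k * Real.pi / n))) := by
  have hu : u ≠ 0 := left_ne_zero_of_mul huv
  have hv : v ≠ 0 := right_ne_zero_of_mul huv
  have hs0 : s ≠ 0 := by
    intro h; rw [h] at hs; exact huv (by rw [← hs]; ring)
  have h2s : (2*s : ℂ) ≠ 0 := by simp [hs0]
  rw [hp, poly_eq_T n hn u v w s hu hv hs0 hs]
  rw [derivative_sub, derivative_C, sub_zero, derivative_C_mul, derivative_comp,
    T_derivative_eq_U, U_factor n hn]
  rw [show (((n:ℤ) : ℂ[X])) = C ((n:ℕ) : ℂ) by push_cast; simp]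
  rw [mul_comp, C_comp, mul_comp, C_comp, Polynomial.prod_comp]
  have hfaccomp : ∀ k ∈ Finset.Icc 1 (n-1),
      (X - C ((Real.cos (k * Real.pi / n) : ℝ) : ℂ)).comp (C (2*s)⁻¹ * (X - C w))
        = C (2*s)⁻¹ * (X - C (w + 2 * s * Real.cos (k * Real.pi / n))) := by
    intro k _
    rw [sub_comp, X_comp, C_comp]
    have ha : C 2 * C s * C ((2*s)⁻¹ : ℂ) = (1 : ℂ[X]) := by
      rw [← Polynomial.C_mul, ← Polynomial.C_mul, mul_inv_cancel₀ h2s, C_1]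
    simp only [C_add, Polynomial.C_mul]
    linear_combination (C ((Real.cos (k * Real.pi / n) : ℝ) : ℂ)) * ha
  rw [Finset.prod_congr rfl hfaccomp, Finset.prod_mul_distrib, Finset.prod_const, Nat.card_Icc,
    show n - 1 + 1 - 1 = n - 1 from rfl]
  have hder : derivative (C ((2*s)⁻¹ : ℂ) * (X - C w)) = C ((2*s)⁻¹ : ℂ) := by
    rw [derivative_C_mul, derivative_sub, derivative_X, derivative_C, sub_zero, mul_one]
  rw [hder, Polynomial.smul_eq_C_mul]
  have hscalar : (2 * s^n : ℂ) * ((2*s)⁻¹ * ((2:ℂ)^(n-1) * ((2*s)⁻¹)^(n-1))) = 1 := by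
    obtain ⟨m, rfl⟩ : ∃ m, n = m + 1 := ⟨n - 1, by omega⟩
    simp only [Nat.add_sub_cancel]
    field_simp
    rw [one_div, inv_pow, mul_pow, pow_succ]; field_simp
  calc C (2 * s^n) * (C ((2*s)⁻¹ : ℂ) * (C ((n:ℕ):ℂ) * (C ((2:ℂ)^(n-1)) *
        ((C ((2*s)⁻¹ : ℂ))^(n-1) * ∏ k ∈ Finset.Icc 1 (n-1),
          (X - C (w + 2 * s * Real.cos (k * Real.pi / n)))))))
      = C ((2 * s^n : ℂ) * ((2*s)⁻¹ * ((2:ℂ)^(n-1) * ((2*s)⁻¹)^(n-1)))) * C ((n:ℕ):ℂ) *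
          ∏ k ∈ Finset.Icc 1 (n-1), (X - C (w + 2 * s * Real.cos (k * Real.pi / n))) := by
        simp only [Polynomial.C_mul, C_pow]; ring
    _ = C ((n:ℕ):ℂ) * ∏ k ∈ Finset.Icc 1 (n-1),
          (X - C (w + 2 * s * Real.cos (k * Real.pi / n))) := by rw [hscalar, C_1, one_mul]
end

section
/- Let p be a complex polynomial of degree 4 whose derivative has roots α + β·cos(kπ/4) for k = 1, 2, 3 (i.e., α + β·√2/2, α, and α − β·√2/2) for some complex α and β ≠ 0. Then the roots of p form a parallelogram: there is an enumeration z₁, z₂, z₃, z₄ of the roots of p (with multiplicity) such that z₁ + z₃ = z₂ + z₄. -/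
open Polynomial in
/-- If the critical points of a degree-4 polynomial `p` are
`α + β·cos(kπ/4)`, `k = 1, 2, 3`, with `β ≠ 0`, then the roots of `p` form a
parallelogram. -/
theorem stmt_14 (p : Polynomial ℂ) (hdeg : p.natDegree = 4) (α β : ℂ) (hβ : β ≠ 0)
    (hp' : (derivative p).roots =
      {α + β * Real.cos (Real.pi / 4), α + β * Real.cos (2 * Real.pi / 4),
        α + β * Real.cos (3 * Real.pi / 4)}) :
    ∃ z₁ z₂ z₃ z₄ : ℂ, p.roots = {z₁, z₂, z₃, z₄} ∧ z₁ + z₃ = z₂ + z₄ := by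
  -- simplify the cosines
  have hc1 : Real.cos (Real.pi / 4) = Real.sqrt 2 / 2 := Real.cos_pi_div_four
  have hc2 : Real.cos (2 * Real.pi / 4) = 0 := by
    rw [show (2 * Real.pi / 4) = Real.pi / 2 by ring, Real.cos_pi_div_two]
  have hc3 : Real.cos (3 * Real.pi / 4) = -(Real.sqrt 2 / 2) := by
    rw [show (3 * Real.pi / 4) = Real.pi - Real.pi / 4 by ring, Real.cos_pi_sub,
      Real.cos_pi_div_four]
  rw [hc1, hc2, hc3] at hp'
  set σ : ℂ := ((Real.sqrt 2 : ℝ) : ℂ) with hσdef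
  have hσ : σ ^ 2 = 2 := by
    rw [hσdef]
    norm_cast
    exact Real.sq_sqrt (by norm_num)
  have hp'2 : (derivative p).roots = {α + β * (σ / 2), α, α - β * (σ / 2)} := by
    rw [hp']
    push_cast
    ring_nf
    rw [hσdef]
  -- derivative is nonzero with natDegree 3
  have hne : derivative p ≠ 0 := by
    intro h
    rw [h, roots_zero] at hp'2
    exact absurd hp'2.symm (by simp)
  have hcard : Multiset.card (derivative p).roots = 3 := by rw [hp'2]; rfl
  have hdlt : (derivative p).natDegree < 4 := hdeg ▸ natDegree_derivative_lt (by omega)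
  have hd3 : (derivative p).natDegree = 3 := by
    have := Polynomial.card_roots' (derivative p)
    omega
  set a : ℂ := (derivative p).leadingCoeff with hadef
  have ha : a ≠ 0 := leadingCoeff_ne_zero.mpr hne
  have hkey : derivative p =
      C a * ((X - C (α + β * (σ / 2))) * ((X - C α) * (X - C (α - β * (σ / 2))))) := by
    have h := C_leadingCoeff_mul_prod_multiset_X_sub_C (p := derivative p) (by rw [hcard, hd3])
    rw [hp'2] at h
    rw [← h]
    simp only [Multiset.insert_eq_cons, Multiset.map_cons, Multiset.prod_cons,
      Multiset.map_singleton, Multiset.prod_singleton]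
    rfl
  -- the antiderivative
  set Q : Polynomial ℂ := C (a/4) * (X - C α)^4 - C (a*β^2/4) * (X - C α)^2 with hQdef
  have hQ : derivative Q = derivative p := by
    rw [hkey, hQdef]
    apply Polynomial.funext
    intro x
    simp [derivative_mul, derivative_pow, derivative_sub]
    linear_combination (a*β^2/4*(x-α)) * hσ
  have hd0 : derivative (p - Q) = 0 := by rw [derivative_sub, hQ, sub_self]
  obtain ⟨c, hc⟩ : ∃ c, p = Q + C c := by
    have := Polynomial.eq_C_of_derivative_eq_zero hd0
    exact ⟨(p - Q).coeff 0, by linear_combination (norm := abel) this⟩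
  -- choose the roots
  obtain ⟨e, he⟩ := IsAlgClosed.exists_pow_nat_eq (k := ℂ) (β^4 - 16*c/a) (n := 2) (by norm_num)
  obtain ⟨w, hw⟩ := IsAlgClosed.exists_pow_nat_eq (k := ℂ) ((β^2 + e)/2) (n := 2) (by norm_num)
  obtain ⟨w', hw'⟩ := IsAlgClosed.exists_pow_nat_eq (k := ℂ) ((β^2 - e)/2) (n := 2) (by norm_num)
  refine ⟨α + w, α + w', α - w, α - w', ?_, by ring⟩
  have he' : a * e ^ 2 = a * β^4 - 16*c := by
    field_simp [he]
    rw [he, mul_sub, mul_div_cancel₀ (16*c) ha]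
  have hfact : p = C (a/4) *
      ((({α + w, α + w', α - w, α - w'} : Multiset ℂ).map fun z => X - C z).prod) := by
    apply Polynomial.funext
    intro x
    rw [hc, hQdef]
    simp [Multiset.map_cons, Multiset.prod_cons]
    linear_combination (a/4*(x-α)^2 - a/4*w'^2) * hw + (a/4*(x-α)^2 - a*(β^2+e)/8) * hw'
      + (1/16) * he'
  rw [hfact, roots_C_mul _ (by simpa using ha), roots_multiset_prod_X_sub_C]
end
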